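/- arXiv:1007.0316 — 6 statements merged into one kernel-verified Lean document; each statement's English description precedes it below -/
import Mathlib

section
/- Let M and N be matroids on E, and let M ∨ N be the matroid whose independent sets are all unions I ∪ J of an independent set I of M and an independent set J of N. Then the rank of any X ⊆ E in M ∨ N equals min over T ⊆ X of (|X \ T| + r_M(T) + r_N(T)). -/
/-- The rank of a set `X` in a matroid `M`: the size of a maximal independent subset of `X`. -/
noncomputable def mrank {α : Type*} (M : Matroid α) (X : Set α) : ℕ :=
  sSup {n | ∃ I, I ⊆ X ∧ M.Indep I ∧ I.ncard = n}

namespace MrankAux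

open Set

variable {α : Type*} {M : Matroid α} {I J X Y T : Set α} {x : α}

lemma mrank_bddAbove (M : Matroid α) (hE : M.E.Finite) (X : Set α) :
    BddAbove {n | ∃ I, I ⊆ X ∧ M.Indep I ∧ I.ncard = n} := by
  refine ⟨M.E.ncard, ?_⟩
  rintro n ⟨I, hIX, hI, rfl⟩
  exact ncard_le_ncard hI.subset_ground hE

lemma mrank_nonempty (M : Matroid α) (X : Set α) :
    {n | ∃ I, I ⊆ X ∧ M.Indep I ∧ I.ncard = n}.Nonempty :=
  ⟨0, ∅, empty_subset _, M.empty_indep, by simp⟩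

lemma le_mrank (hE : M.E.Finite) (hI : M.Indep I) (hIX : I ⊆ X) : I.ncard ≤ mrank M X :=
  le_csSup (mrank_bddAbove M hE X) ⟨I, hIX, hI, rfl⟩

lemma exists_mrank_witness (hE : M.E.Finite) (X : Set α) :
    ∃ I, I ⊆ X ∧ M.Indep I ∧ I.ncard = mrank M X :=
  Nat.sSup_mem (mrank_nonempty M X) (mrank_bddAbove M hE X)

lemma mrank_empty (M : Matroid α) : mrank M ∅ = 0 := by
  refine le_antisymm (csSup_le (mrank_nonempty M ∅) ?_) (Nat.zero_le _)
  rintro n ⟨I, hIX, hI, rfl⟩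
  simp [subset_empty_iff.mp hIX]

lemma mrank_mono (hE : M.E.Finite) (h : X ⊆ Y) : mrank M X ≤ mrank M Y := by
  refine csSup_le_csSup (mrank_bddAbove M hE Y) (mrank_nonempty M X) ?_
  rintro n ⟨I, hIX, hI, rfl⟩
  exact ⟨I, hIX.trans h, hI, rfl⟩

lemma exists_mrank_ext (hE : M.E.Finite) (hI : M.Indep I) (hIX : I ⊆ X) :
    ∃ J, I ⊆ J ∧ J ⊆ X ∧ M.Indep J ∧ J.ncard = mrank M X := by
  have hne : ({n | ∃ J, I ⊆ J ∧ J ⊆ X ∧ M.Indep J ∧ J.ncard = n}).Nonempty :=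
    ⟨_, I, Subset.rfl, hIX, hI, rfl⟩
  have hbd : BddAbove {n | ∃ J, I ⊆ J ∧ J ⊆ X ∧ M.Indep J ∧ J.ncard = n} := by
    refine ⟨M.E.ncard, ?_⟩
    rintro n ⟨J, _, _, hJ, rfl⟩
    exact ncard_le_ncard hJ.subset_ground hE
  obtain ⟨J, hIJ, hJX, hJ, hJc⟩ := Nat.sSup_mem hne hbd
  refine ⟨J, hIJ, hJX, hJ, le_antisymm (le_mrank hE hJ hJX) (not_lt.1 fun hlt => ?_)⟩
  obtain ⟨K, hKX, hK, hKc⟩ := exists_mrank_witness hE X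
  have hJf : J.Finite := hE.subset hJ.subset_ground
  have hKf : K.Finite := hE.subset hK.subset_ground
  have hlt' : J.encard < K.encard := by
    rw [← hJf.cast_ncard_eq, ← hKf.cast_ncard_eq]
    exact_mod_cast hKc ▸ hlt
  obtain ⟨e, he, hins⟩ := hJ.augment hK hlt'
  have hmem : (insert e J).ncard ≤ sSup {n | ∃ J, I ⊆ J ∧ J ⊆ X ∧ M.Indep J ∧ J.ncard = n} :=
    le_csSup hbd ⟨insert e J, hIJ.trans (subset_insert _ _),
      insert_subset (hKX he.1) hJX, hins, rfl⟩
  rw [ncard_insert_of_notMem he.2 hJf] at hmem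
  omega

lemma mrank_submod (hE : M.E.Finite) (A B : Set α) :
    mrank M (A ∪ B) + mrank M (A ∩ B) ≤ mrank M A + mrank M B := by
  obtain ⟨I, hIAB, hI, hIc⟩ := exists_mrank_witness hE (A ∩ B)
  obtain ⟨J, hIJ, hJAB, hJ, hJc⟩ :=
    exists_mrank_ext hE hI (hIAB.trans (inter_subset_left.trans subset_union_left))
  have hJf : J.Finite := hE.subset hJ.subset_ground
  have h1 : (J ∩ A).ncard ≤ mrank M A :=
    le_mrank hE (hJ.subset inter_subset_left) inter_subset_right
  have h2 : (J ∩ B).ncard ≤ mrank M B :=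
    le_mrank hE (hJ.subset inter_subset_left) inter_subset_right
  have hu : (J ∩ A) ∪ (J ∩ B) = J := by
    rw [← inter_union_distrib_left]
    exact inter_eq_self_of_subset_left hJAB
  have hi : (J ∩ A) ∩ (J ∩ B) = J ∩ (A ∩ B) := by
    ext y; simp only [mem_inter_iff]; tauto
  have hkey := ncard_union_add_ncard_inter (J ∩ A) (J ∩ B)
    (hJf.inter_of_left _) (hJf.inter_of_left _)
  rw [hu, hi] at hkey
  have hIsub : I.ncard ≤ (J ∩ (A ∩ B)).ncard :=
    ncard_le_ncard (subset_inter hIJ hIAB) (hJf.inter_of_left _)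
  omega

lemma mrank_insert_loop (h : ¬ M.Indep {x}) (T : Set α) :
    mrank M (insert x T) = mrank M T := by
  unfold mrank
  congr 1
  ext n
  constructor
  · rintro ⟨I, hIX, hI, rfl⟩
    have hxI : x ∉ I := fun hx => h (hI.subset (singleton_subset_iff.2 hx))
    refine ⟨I, fun y hy => ?_, hI, rfl⟩
    rcases mem_insert_iff.1 (hIX hy) with rfl | hyT
    · exact absurd hy hxI
    · exact hyT
  · rintro ⟨I, hIX, hI, rfl⟩
    exact ⟨I, hIX.trans (subset_insert _ _), hI, rfl⟩

/-- Contraction of a matroid by a single non-loop element. -/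
noncomputable def conM (M : Matroid α) (hE : M.E.Finite) {x : α} (hx : M.Indep {x}) :
    Matroid α :=
  (IndepMatroid.ofFinite (E := M.E \ {x}) (hE.diff)
    (fun I => x ∉ I ∧ M.Indep (insert x I))
    ⟨notMem_empty x, by simpa using hx⟩
    (fun I J hJ hIJ => ⟨fun h => hJ.1 (hIJ h), hJ.2.subset (insert_subset_insert hIJ)⟩)
    (fun I J hI hJ hIJ => by
      have hIf : I.Finite := (hE.subset hI.2.subset_ground).subset (subset_insert x I)
      have hJf : J.Finite := (hE.subset hJ.2.subset_ground).subset (subset_insert x J)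
      have hlt : (insert x I).encard < (insert x J).encard := by
        rw [encard_insert_of_notMem hI.1, encard_insert_of_notMem hJ.1,
          ← hIf.cast_ncard_eq, ← hJf.cast_ncard_eq]
        exact_mod_cast Nat.add_lt_add_right hIJ 1
      obtain ⟨e, he, hins⟩ := hI.2.augment hJ.2 hlt
      have hex : e ≠ x := fun h => he.2 (h ▸ mem_insert x I)
      refine ⟨e, (mem_insert_iff.1 he.1).resolve_left hex,
        fun h => he.2 (mem_insert_of_mem x h), ?_, ?_⟩
      · rintro (rfl | h)
        · exact hex rfl
        · exact hI.1 h
      · rw [Set.insert_comm]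
        exact hins)
    (fun I hI y hy => ⟨hI.2.subset_ground (mem_insert_of_mem x hy),
      fun h => hI.1 (mem_singleton_iff.1 h ▸ hy)⟩)).matroid

lemma conM_E (hE : M.E.Finite) (hx : M.Indep {x}) : (conM M hE hx).E = M.E \ {x} := rfl

lemma conM_indep (hE : M.E.Finite) (hx : M.Indep {x}) :
    (conM M hE hx).Indep I ↔ x ∉ I ∧ M.Indep (insert x I) := by
  exact Iff.rfl

lemma conM_mrank (hE : M.E.Finite) (hx : M.Indep {x}) (T : Set α) (hxT : x ∉ T) :
    mrank M (insert x T) = mrank (conM M hE hx) T + 1 := by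
  have hE' : (conM M hE hx).E.Finite := by rw [conM_E]; exact hE.diff
  apply le_antisymm
  · obtain ⟨J, hxJ, hJX, hJ, hJc⟩ :=
      exists_mrank_ext hE hx (singleton_subset_iff.2 (mem_insert x T))
    have hxJ' : x ∈ J := hxJ rfl
    have hJf : J.Finite := hE.subset hJ.subset_ground
    have hKi : (conM M hE hx).Indep (J \ {x}) := by
      rw [conM_indep]
      refine ⟨fun h => h.2 rfl, ?_⟩
      rwa [insert_diff_singleton, insert_eq_of_mem hxJ']
    have hKT : J \ {x} ⊆ T := by
      rintro y ⟨hy, hyx⟩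
      exact (mem_insert_iff.1 (hJX hy)).resolve_left hyx
    have hle := le_mrank hE' hKi hKT
    have hcard : (J \ {x}).ncard = J.ncard - 1 := ncard_diff_singleton_of_mem hxJ'
    have hpos : 0 < J.ncard := (ncard_pos hJf).2 ⟨x, hxJ'⟩
    omega
  · obtain ⟨I, hIT, hI, hIc⟩ := exists_mrank_witness hE' T
    rw [conM_indep] at hI
    have hIf : I.Finite := (hE.subset hI.2.subset_ground).subset (subset_insert x I)
    have hle := le_mrank hE hI.2 (insert_subset_insert hIT)
    rw [ncard_insert_of_notMem hI.1 hIf] at hle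
    omega

lemma key (n : ℕ) : ∀ (M N : Matroid α), M.E.Finite → N.E.Finite →
    ∀ X : Set α, X ⊆ M.E → X ⊆ N.E → X.ncard ≤ n →
    ∃ I₁ I₂ T, M.Indep I₁ ∧ N.Indep I₂ ∧ I₁ ⊆ X ∧ I₂ ⊆ X ∧ T ⊆ X ∧
      (X \ T).ncard + mrank M T + mrank N T ≤ (I₁ ∪ I₂).ncard := by
  induction n with
  | zero =>
    intro M N hME hNE X hXM hXN hn
    have hXf : X.Finite := hME.subset hXM
    have hX : X = ∅ := (ncard_eq_zero hXf).1 (Nat.le_zero.1 hn)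
    subst hX
    exact ⟨∅, ∅, ∅, M.empty_indep, N.empty_indep, empty_subset _, empty_subset _,
      empty_subset _, by simp [mrank_empty]⟩
  | succ n ih =>
    intro M N hME hNE X hXM hXN hn
    have hXf : X.Finite := hME.subset hXM
    obtain rfl | ⟨x, hx⟩ := X.eq_empty_or_nonempty
    · exact ⟨∅, ∅, ∅, M.empty_indep, N.empty_indep, empty_subset _, empty_subset _,
        empty_subset _, by simp [mrank_empty]⟩
    have hX'f : (X \ {x}).Finite := hXf.diff
    have hX'card : (X \ {x}).ncard ≤ n := by
      have h1 : (X \ {x}).ncard = X.ncard - 1 := ncard_diff_singleton_of_mem hx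
      have h2 : 0 < X.ncard := (ncard_pos hXf).2 ⟨x, hx⟩
      omega
    have hX'M : X \ {x} ⊆ M.E := diff_subset.trans hXM
    have hX'N : X \ {x} ⊆ N.E := diff_subset.trans hXN
    have hdiffeq : ∀ T : Set α, X \ insert x T = (X \ {x}) \ T := fun T => by
      rw [diff_diff, singleton_union]
    have hxX' : x ∉ X \ {x} := fun h => h.2 rfl
    by_cases hM : M.Indep {x} <;> by_cases hN : N.Indep {x}
    · -- x is a non-loop of both M and N
      have hMxE : (conM M hME hM).E.Finite := by rw [conM_E]; exact hME.diff
      have hNxE : (conM N hNE hN).E.Finite := by rw [conM_E]; exact hNE.diff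
      have hX'Mx : X \ {x} ⊆ (conM M hME hM).E := by
        rw [conM_E]; exact diff_subset_diff_left hXM
      have hX'Nx : X \ {x} ⊆ (conM N hNE hN).E := by
        rw [conM_E]; exact diff_subset_diff_left hXN
      obtain ⟨I₁, I₂, T₁, hI₁, hI₂, hI₁X, hI₂X, hT₁X, hineq₁⟩ :=
        ih (conM M hME hM) N hMxE hNE (X \ {x}) hX'Mx hX'N hX'card
      obtain ⟨J₁, J₂, T₂, hJ₁, hJ₂, hJ₁X, hJ₂X, hT₂X, hineq₂⟩ :=
        ih M (conM N hNE hN) hME hNxE (X \ {x}) hX'M hX'Nx hX'card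
      rw [conM_indep] at hI₁
      rw [conM_indep] at hJ₂
      have hrM₁ : mrank M (insert x T₁) = mrank (conM M hME hM) T₁ + 1 :=
        conM_mrank hME hM T₁ (fun h => hxX' (hT₁X h))
      have hrN₂ : mrank N (insert x T₂) = mrank (conM N hNE hN) T₂ + 1 :=
        conM_mrank hNE hN T₂ (fun h => hxX' (hT₂X h))
      have hSne : {m | ∃ T ⊆ X, m = (X \ T).ncard + mrank M T + mrank N T}.Nonempty :=
        ⟨_, ∅, empty_subset _, rfl⟩
      obtain ⟨T₀, hT₀X, hT₀⟩ := Nat.sInf_mem hSne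
      have hkle : ∀ T, T ⊆ X →
          sInf {m | ∃ T ⊆ X, m = (X \ T).ncard + mrank M T + mrank N T} ≤
            (X \ T).ncard + mrank M T + mrank N T :=
        fun T hT => Nat.sInf_le ⟨T, hT, rfl⟩
      suffices h : ∃ K₁ K₂, M.Indep K₁ ∧ N.Indep K₂ ∧ K₁ ⊆ X ∧ K₂ ⊆ X ∧
          sInf {m | ∃ T ⊆ X, m = (X \ T).ncard + mrank M T + mrank N T} ≤ (K₁ ∪ K₂).ncard by
        obtain ⟨K₁, K₂, a, b, c, d, e⟩ := h
        exact ⟨K₁, K₂, T₀, a, b, c, d, hT₀X, by rw [← hT₀]; exact e⟩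
      have hufin : (I₁ ∪ I₂).Finite := hX'f.subset (union_subset hI₁X hI₂X)
      have hvfin : (J₁ ∪ J₂).Finite := hX'f.subset (union_subset hJ₁X hJ₂X)
      by_cases h1 : sInf {m | ∃ T ⊆ X, m = (X \ T).ncard + mrank M T + mrank N T} ≤
          ((X \ {x}) \ T₁).ncard + mrank (conM M hME hM) T₁ + mrank N T₁ + 1
      · refine ⟨insert x I₁, I₂, hI₁.2, hI₂, insert_subset hx (hI₁X.trans diff_subset),
          hI₂X.trans diff_subset, ?_⟩
        rw [insert_union,
          ncard_insert_of_notMem (fun h => hxX' (union_subset hI₁X hI₂X h)) hufin]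
        omega
      by_cases h2 : sInf {m | ∃ T ⊆ X, m = (X \ T).ncard + mrank M T + mrank N T} ≤
          ((X \ {x}) \ T₂).ncard + mrank M T₂ + mrank (conM N hNE hN) T₂ + 1
      · refine ⟨J₁, insert x J₂, hJ₁, hJ₂.2, hJ₁X.trans diff_subset,
          insert_subset hx (hJ₂X.trans diff_subset), ?_⟩
        rw [union_insert,
          ncard_insert_of_notMem (fun h => hxX' (union_subset hJ₁X hJ₂X h)) hvfin]
        omega
      exfalso
      push_neg at h1 h2
      have hAX : insert x (T₁ ∪ T₂) ⊆ X :=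
        insert_subset hx ((union_subset hT₁X hT₂X).trans diff_subset)
      have hBX : T₁ ∩ T₂ ⊆ X := (inter_subset_left.trans hT₁X).trans diff_subset
      have hkA := hkle _ hAX
      have hkB := hkle _ hBX
      have hsubM := mrank_submod hME (insert x T₁) T₂
      have hsubN := mrank_submod hNE T₁ (insert x T₂)
      rw [insert_union] at hsubM
      rw [union_insert] at hsubN
      have hmonoM : mrank M (T₁ ∩ T₂) ≤ mrank M (insert x T₁ ∩ T₂) :=
        mrank_mono hME (inter_subset_inter (subset_insert _ _) Subset.rfl)
      have hmonoN : mrank N (T₁ ∩ T₂) ≤ mrank N (T₁ ∩ insert x T₂) :=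
        mrank_mono hNE (inter_subset_inter Subset.rfl (subset_insert _ _))
      have hcA : (X \ insert x (T₁ ∪ T₂)).ncard = ((X \ {x}) \ (T₁ ∪ T₂)).ncard := by
        rw [hdiffeq]
      have hcB : (X \ (T₁ ∩ T₂)).ncard = ((X \ {x}) \ (T₁ ∩ T₂)).ncard + 1 := by
        have hxB : x ∉ (X \ {x}) \ (T₁ ∩ T₂) := fun h => hxX' h.1
        have heq : X \ (T₁ ∩ T₂) = insert x ((X \ {x}) \ (T₁ ∩ T₂)) := by
          ext y
          simp only [mem_diff, mem_insert_iff, mem_inter_iff, mem_singleton_iff]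
          constructor
          · rintro ⟨hyX, hyB⟩
            by_cases hyx : y = x
            · exact Or.inl hyx
            · exact Or.inr ⟨⟨hyX, hyx⟩, fun h => hyB h⟩
          · rintro (rfl | ⟨⟨hyX, _⟩, hyB⟩)
            · exact ⟨hx, fun h => hxX' (hT₁X h.1)⟩
            · exact ⟨hyX, hyB⟩
        rw [heq, ncard_insert_of_notMem hxB hX'f.diff]
      have hcsum : ((X \ {x}) \ (T₁ ∪ T₂)).ncard + ((X \ {x}) \ (T₁ ∩ T₂)).ncard =
          ((X \ {x}) \ T₁).ncard + ((X \ {x}) \ T₂).ncard := by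
        have e1 : (X \ {x}) \ (T₁ ∪ T₂) = ((X \ {x}) \ T₁) ∩ ((X \ {x}) \ T₂) := by
          ext y; simp only [mem_diff, mem_union, mem_inter_iff]; tauto
        have e2 : (X \ {x}) \ (T₁ ∩ T₂) = ((X \ {x}) \ T₁) ∪ ((X \ {x}) \ T₂) := by
          ext y; simp only [mem_diff, mem_union, mem_inter_iff]; tauto
        rw [e1, e2, add_comm, ncard_union_add_ncard_inter _ _ hX'f.diff hX'f.diff]
      omega
    · -- x non-loop of M, loop of N
      have hMxE : (conM M hME hM).E.Finite := by rw [conM_E]; exact hME.diff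
      have hX'Mx : X \ {x} ⊆ (conM M hME hM).E := by
        rw [conM_E]; exact diff_subset_diff_left hXM
      obtain ⟨I₁, I₂, T₁, hI₁, hI₂, hI₁X, hI₂X, hT₁X, hineq₁⟩ :=
        ih (conM M hME hM) N hMxE hNE (X \ {x}) hX'Mx hX'N hX'card
      rw [conM_indep] at hI₁
      have hufin : (I₁ ∪ I₂).Finite := hX'f.subset (union_subset hI₁X hI₂X)
      refine ⟨insert x I₁, I₂, insert x T₁, hI₁.2, hI₂,
        insert_subset hx (hI₁X.trans diff_subset), hI₂X.trans diff_subset,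
        insert_subset hx (hT₁X.trans diff_subset), ?_⟩
      rw [hdiffeq, conM_mrank hME hM T₁ (fun h => hxX' (hT₁X h)),
        mrank_insert_loop hN, insert_union,
        ncard_insert_of_notMem (fun h => hxX' (union_subset hI₁X hI₂X h)) hufin]
      omega
    · -- x loop of M, non-loop of N
      have hNxE : (conM N hNE hN).E.Finite := by rw [conM_E]; exact hNE.diff
      have hX'Nx : X \ {x} ⊆ (conM N hNE hN).E := by
        rw [conM_E]; exact diff_subset_diff_left hXN
      obtain ⟨I₁, I₂, T₁, hI₁, hI₂, hI₁X, hI₂X, hT₁X, hineq₁⟩ :=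
        ih M (conM N hNE hN) hME hNxE (X \ {x}) hX'M hX'Nx hX'card
      rw [conM_indep] at hI₂
      have hufin : (I₁ ∪ I₂).Finite := hX'f.subset (union_subset hI₁X hI₂X)
      refine ⟨I₁, insert x I₂, insert x T₁, hI₁, hI₂.2, hI₁X.trans diff_subset,
        insert_subset hx (hI₂X.trans diff_subset),
        insert_subset hx (hT₁X.trans diff_subset), ?_⟩
      rw [hdiffeq, conM_mrank hNE hN T₁ (fun h => hxX' (hT₁X h)),
        mrank_insert_loop hM, union_insert,
        ncard_insert_of_notMem (fun h => hxX' (union_subset hI₁X hI₂X h)) hufin]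
      omega
    · -- x loop of both
      obtain ⟨I₁, I₂, T₁, hI₁, hI₂, hI₁X, hI₂X, hT₁X, hineq₁⟩ :=
        ih M N hME hNE (X \ {x}) hX'M hX'N hX'card
      refine ⟨I₁, I₂, insert x T₁, hI₁, hI₂, hI₁X.trans diff_subset,
        hI₂X.trans diff_subset, insert_subset hx (hT₁X.trans diff_subset), ?_⟩
      rw [hdiffeq, mrank_insert_loop hM, mrank_insert_loop hN]
      exact hineq₁

end MrankAux

open MrankAux Set in
/-- The matroid union theorem of Nash-Williams. -/
theorem matroid_union_rank {α : Type*} (M N P : Matroid α) [M.Finite]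
    (hNE : N.E = M.E) (hPE : P.E = M.E)
    (hPI : ∀ I, P.Indep I ↔ ∃ I₁ I₂, M.Indep I₁ ∧ N.Indep I₂ ∧ I = I₁ ∪ I₂)
    (X : Set α) (hX : X ⊆ M.E) :
    mrank P X = sInf {n | ∃ T ⊆ X, n = (X \ T).ncard + mrank M T + mrank N T} := by
  have hME : M.E.Finite := M.ground_finite
  have hNEf : N.E.Finite := by rw [hNE]; exact hME
  have hPEf : P.E.Finite := by rw [hPE]; exact hME
  have hXf : X.Finite := hME.subset hX
  have hXN : X ⊆ N.E := hNE ▸ hX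
  have hSne : {n | ∃ T ⊆ X, n = (X \ T).ncard + mrank M T + mrank N T}.Nonempty :=
    ⟨_, ∅, empty_subset _, rfl⟩
  apply le_antisymm
  · apply le_csInf hSne
    rintro n ⟨T, hT, rfl⟩
    obtain ⟨I, hIX, hI, hIc⟩ := exists_mrank_witness hPEf X
    obtain ⟨I₁, I₂, h1, h2, rfl⟩ := (hPI I).1 hI
    have hIf : (I₁ ∪ I₂).Finite := hXf.subset hIX
    have e1 : ((I₁ ∪ I₂) ∩ T).ncard + ((I₁ ∪ I₂) \ T).ncard = (I₁ ∪ I₂).ncard :=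
      ncard_inter_add_ncard_diff_eq_ncard _ _ hIf
    have e2 : ((I₁ ∪ I₂) \ T).ncard ≤ (X \ T).ncard :=
      ncard_le_ncard (diff_subset_diff_left hIX) hXf.diff
    have e3 : ((I₁ ∪ I₂) ∩ T).ncard ≤ (I₁ ∩ T).ncard + (I₂ ∩ T).ncard := by
      rw [union_inter_distrib_right]; exact ncard_union_le _ _
    have e4 : (I₁ ∩ T).ncard ≤ mrank M T :=
      le_mrank hME (h1.subset inter_subset_left) inter_subset_right
    have e5 : (I₂ ∩ T).ncard ≤ mrank N T :=
      le_mrank hNEf (h2.subset inter_subset_left) inter_subset_right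
    omega
  · obtain ⟨I₁, I₂, T, h1, h2, hI₁X, hI₂X, hTX, hineq⟩ :=
      key X.ncard M N hME hNEf X hX hXN le_rfl
    have hmr : (I₁ ∪ I₂).ncard ≤ mrank P X :=
      le_mrank hPEf ((hPI _).2 ⟨I₁, I₂, h1, h2, rfl⟩) (union_subset hI₁X hI₂X)
    exact le_trans (Nat.sInf_le ⟨T, hTX, rfl⟩) (hineq.trans hmr)
end

section
/- Let M be a matroid on E and let ∨^k M denote the union of k copies of M. Then for any X ⊆ E, the rank of X in ∨^k M equals min over T ⊆ X of (|X \ T| + k · r_M(T)). -/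
open Set

section Aux

set_option linter.unusedSectionVars false

variable {α : Type*} {M : Matroid α} [M.Finite] {I J X Y B S T : Set α} {e : α}

lemma indep_finite (hI : M.Indep I) : I.Finite := M.set_finite I hI.subset_ground

lemma mrank_eq_of_basis' (hB : M.IsBasis' B X) : mrank M X = B.ncard := by
  refine IsGreatest.csSup_eq ⟨⟨B, hB.subset, hB.indep, rfl⟩, ?_⟩
  rintro n ⟨J, hJX, hJ, rfl⟩
  obtain ⟨J₂, hJ₂, hJJ₂⟩ := hJ.subset_isBasis'_of_subset hJX
  have h2 : J₂.ncard = B.ncard := by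
    have := hJ₂.encard_eq_encard hB
    rw [Set.ncard, Set.ncard, this]
  exact h2 ▸ Set.ncard_le_ncard hJJ₂ (indep_finite hJ₂.indep)

lemma mrank_eq_of_basis (hB : M.IsBasis B X) : mrank M X = B.ncard :=
  mrank_eq_of_basis' hB.isBasis'

lemma indep_ncard_le_mrank (hJ : M.Indep J) (hJX : J ⊆ X) : J.ncard ≤ mrank M X := by
  obtain ⟨B, hB⟩ := M.exists_isBasis' X
  obtain ⟨J₂, hJ₂, hJJ₂⟩ := hJ.subset_isBasis'_of_subset hJX
  have h2 : J₂.ncard = B.ncard := by rw [Set.ncard, Set.ncard, hJ₂.encard_eq_encard hB]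
  rw [mrank_eq_of_basis' hB, ← h2]
  exact Set.ncard_le_ncard hJJ₂ (indep_finite hJ₂.indep)

lemma mrank_indep (hI : M.Indep I) : mrank M I = I.ncard :=
  mrank_eq_of_basis hI.isBasis_self

lemma mrank_empty (M : Matroid α) [M.Finite] : mrank M ∅ = 0 := by
  simp [mrank_indep M.empty_indep]

lemma mrank_mono (h : X ⊆ Y) : mrank M X ≤ mrank M Y := by
  obtain ⟨B, hB⟩ := M.exists_isBasis' X
  rw [mrank_eq_of_basis' hB]
  exact indep_ncard_le_mrank hB.indep (hB.subset.trans h)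

lemma mrank_le_ncard (hX : X.Finite) : mrank M X ≤ X.ncard := by
  obtain ⟨B, hB⟩ := M.exists_isBasis' X
  rw [mrank_eq_of_basis' hB]
  exact Set.ncard_le_ncard hB.subset hX

lemma mrank_insert_of_mem_closure (hX : X ⊆ M.E) (he : e ∈ M.closure X) :
    mrank M (insert e X) = mrank M X := by
  obtain ⟨I, hI⟩ := M.exists_isBasis X hX
  have hcl : M.closure I = M.closure X := hI.closure_eq_closure
  have h2 : M.IsBasis I (insert e X) := by
    refine hI.indep.isBasis_closure.isBasis_subset (hI.subset.trans (subset_insert _ _)) ?_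
    rw [hcl]
    exact insert_subset he (M.subset_closure X hX)
  rw [mrank_eq_of_basis hI, mrank_eq_of_basis h2]

lemma mrank_insert_le : mrank M (insert e X) ≤ mrank M X + 1 := by
  obtain ⟨B, hB⟩ := M.exists_isBasis' (insert e X)
  rw [mrank_eq_of_basis' hB]
  have h1 : B.ncard ≤ (B \ {e}).ncard + 1 := by
    have hsub : B ⊆ insert e (B \ {e}) := by
      intro x hx
      by_cases hxe : x = e
      · exact hxe ▸ mem_insert _ _
      · exact mem_insert_of_mem _ ⟨hx, hxe⟩
    exact le_trans (Set.ncard_le_ncard hsub (((indep_finite hB.indep).diff).insert e))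
      (Set.ncard_insert_le _ _)
  refine h1.trans (Nat.add_le_add_right (indep_ncard_le_mrank (hB.indep.subset diff_subset) ?_) 1)
  rintro x ⟨hx, hxe⟩
  rcases hB.subset hx with h | h
  · exact absurd h hxe
  · exact h

lemma mrank_insert_of_not_mem_closure (hX : X ⊆ M.E) (heE : e ∈ M.E)
    (he : e ∉ M.closure X) : mrank M (insert e X) = mrank M X + 1 := by
  obtain ⟨I, hI⟩ := M.exists_isBasis X hX
  have heX : e ∉ X := fun h => he (M.subset_closure X hX h)
  have heI : e ∉ I := fun h => heX (hI.subset h)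
  have hins : M.Indep (insert e I) := by
    rw [hI.indep.insert_indep_iff_of_notMem heI, hI.closure_eq_closure]
    exact ⟨heE, he⟩
  refine le_antisymm mrank_insert_le ?_
  rw [mrank_eq_of_basis hI, ← Set.ncard_insert_of_notMem heI (indep_finite hI.indep)]
  exact indep_ncard_le_mrank hins (insert_subset_insert hI.subset)

lemma mrank_submod (hX : X ⊆ M.E) (hY : Y ⊆ M.E) :
    mrank M (X ∪ Y) + mrank M (X ∩ Y) ≤ mrank M X + mrank M Y := by
  obtain ⟨I, hI⟩ := M.exists_isBasis (X ∩ Y) (inter_subset_left.trans hX)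
  obtain ⟨J, hJ, hIJ⟩ := hI.indep.subset_isBasis_of_subset
    (hI.subset.trans (inter_subset_left.trans subset_union_left)) (union_subset hX hY)
  have hJfin := indep_finite hJ.indep
  rw [mrank_eq_of_basis hJ, mrank_eq_of_basis hI]
  have key : J.ncard + I.ncard ≤ (J ∩ X).ncard + (J ∩ Y).ncard := by
    have h1 : (J ∩ X) ∪ (J ∩ Y) = J := by
      rw [← inter_union_distrib_left, inter_eq_self_of_subset_left hJ.subset]
    have h2 : (J ∩ X) ∩ (J ∩ Y) = J ∩ (X ∩ Y) := by ext x; simp; tauto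
    have h3 := Set.ncard_union_add_ncard_inter (J ∩ X) (J ∩ Y)
      (hJfin.inter_of_left X) (hJfin.inter_of_left Y)
    rw [h1, h2] at h3
    have h4 : I.ncard ≤ (J ∩ (X ∩ Y)).ncard :=
      Set.ncard_le_ncard (subset_inter hIJ hI.subset) (hJfin.inter_of_left _)
    omega
  refine key.trans (add_le_add ?_ ?_)
  · exact indep_ncard_le_mrank (hJ.indep.subset inter_subset_left) inter_subset_right
  · exact indep_ncard_le_mrank (hJ.indep.subset inter_subset_left) inter_subset_right

lemma ncard_iUnion_le {k : ℕ} (A : Fin k → Set α) (hA : ∀ i, (A i).Finite) :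
    (⋃ i, A i).ncard ≤ ∑ i, (A i).ncard := by
  induction k with
  | zero => simp
  | succ n ih =>
    have h1 : (⋃ i, A i) = A 0 ∪ ⋃ i : Fin n, A i.succ := by
      ext x
      simp only [mem_iUnion, mem_union]
      constructor
      · rintro ⟨i, hi⟩
        rcases Fin.eq_zero_or_eq_succ i with h | ⟨j, rfl⟩
        · exact Or.inl (h ▸ hi)
        · exact Or.inr ⟨j, hi⟩
      · rintro (h | ⟨j, hj⟩)
        · exact ⟨0, h⟩
        · exact ⟨j.succ, hj⟩
    rw [h1, Fin.sum_univ_succ]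
    exact le_trans (Set.ncard_union_le _ _) (Nat.add_le_add_left (ih _ (fun i => hA i.succ)) _)

lemma key_partition {α : Type*} (M : Matroid α) [M.Finite] (k : ℕ) :
    ∀ (n : ℕ) (I : Set α) (C : Fin k → Set α), I.ncard ≤ n → I ⊆ M.E →
    (∀ i, M.Indep (C i)) → (∀ i, Disjoint I (C i)) →
    (∀ S, S ⊆ I → S.ncard + ∑ i, (C i).ncard ≤ ∑ i, mrank M (S ∪ C i)) →
    ∃ F : Fin k → Set α, (∀ i, F i ⊆ I) ∧ (∀ i, M.Indep (F i ∪ C i)) ∧ I = ⋃ i, F i := by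
  intro n
  induction n with
  | zero =>
    intro I C hn hIE hC _ _
    have hIfin : I.Finite := M.set_finite I hIE
    have hI : I = ∅ := by
      rw [← Set.ncard_eq_zero hIfin]; omega
    exact ⟨fun _ => ∅, fun i => by simp [hI], fun i => by simpa using hC i, by simp [hI]⟩
  | succ n ih =>
    intro I C hn hIE hC hdisj hcond
    rcases I.eq_empty_or_nonempty with rfl | ⟨e, he⟩
    · exact ⟨fun _ => ∅, fun i => by simp, fun i => by simpa using hC i, by simp⟩
    have hIfin : I.Finite := M.set_finite I hIE
    have hCE : ∀ i, C i ⊆ M.E := fun i => (hC i).subset_ground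
    have hSCE : ∀ (S : Set α) (i : Fin k), S ⊆ I → S ∪ C i ⊆ M.E :=
      fun S i hS => union_subset (hS.trans hIE) (hCE i)
    set tight : Set α → Prop := fun S => S.ncard + ∑ i, (C i).ncard = ∑ i, mrank M (S ∪ C i)
      with htight_def
    -- tight sets are closed under union
    have tight_union : ∀ S S', S ⊆ I → S' ⊆ I → tight S → tight S' → tight (S ∪ S') := by
      intro S S' hS hS' htS htS'
      have hsub : ∀ i : Fin k, mrank M ((S ∪ S') ∪ C i) + mrank M ((S ∩ S') ∪ C i) ≤
          mrank M (S ∪ C i) + mrank M (S' ∪ C i) := by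
        intro i
        have h1 : (S ∪ C i) ∪ (S' ∪ C i) = (S ∪ S') ∪ C i := by ext x; simp; tauto
        have h2 : (S ∪ C i) ∩ (S' ∪ C i) = (S ∩ S') ∪ C i := by ext x; simp; tauto
        have := mrank_submod (hSCE S i hS) (hSCE S' i hS')
        rw [h1, h2] at this
        exact this
      have hsum : ∑ i, mrank M ((S ∪ S') ∪ C i) + ∑ i, mrank M ((S ∩ S') ∪ C i) ≤
          ∑ i, mrank M (S ∪ C i) + ∑ i, mrank M (S' ∪ C i) := by
        rw [← Finset.sum_add_distrib, ← Finset.sum_add_distrib]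
        exact Finset.sum_le_sum fun i _ => hsub i
      have hu := hcond (S ∪ S') (union_subset hS hS')
      have hi := hcond (S ∩ S') ((inter_subset_left).trans hS)
      have hcard : (S ∪ S').ncard + (S ∩ S').ncard = S.ncard + S'.ncard :=
        Set.ncard_union_add_ncard_inter S S' (hIfin.subset hS) (hIfin.subset hS')
      simp only [htight_def] at htS htS' ⊢
      omega
    -- the maximal tight subset of I \ {e}
    have hcolfin : {S | S ⊆ I \ {e} ∧ tight S}.Finite :=
      (Set.Finite.finite_subsets (hIfin.diff)).subset fun S hS => hS.1
    have hcolne : {S | S ⊆ I \ {e} ∧ tight S}.Nonempty := by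
      refine ⟨∅, empty_subset _, ?_⟩
      simp only [htight_def, Set.ncard_empty, empty_union, zero_add]
      exact Finset.sum_congr rfl fun i _ => (mrank_indep (hC i)).symm
    obtain ⟨T, hTmem, hTmax⟩ := Set.Finite.exists_maximalFor Set.ncard _ hcolfin hcolne
    have hTI : T ⊆ I \ {e} := hTmem.1
    have hTfin : T.Finite := hIfin.subset (hTI.trans diff_subset)
    have hTall : ∀ S, S ⊆ I \ {e} → tight S → S ⊆ T := by
      intro S hS htS
      have hmem : T ∪ S ∈ {S | S ⊆ I \ {e} ∧ tight S} :=
        ⟨union_subset hTI hS, tight_union T S (hTI.trans diff_subset) (hS.trans diff_subset)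
          hTmem.2 htS⟩
      have h1 : T.ncard ≤ (T ∪ S).ncard :=
        Set.ncard_le_ncard subset_union_left (hIfin.subset (hmem.1.trans diff_subset))
      have h2 := hTmax hmem h1
      have := Set.eq_of_subset_of_ncard_le subset_union_left h2.ge
        (hIfin.subset (hmem.1.trans diff_subset))
      rw [this]
      exact subset_union_right
    -- find j such that e is not spanned
    have hej : ∃ j, e ∉ M.closure (T ∪ C j) := by
      by_contra hcon
      push_neg at hcon
      have heT : e ∉ T := fun h => (hTI h).2 rfl
      have hstep : ∀ i : Fin k, mrank M ((insert e T) ∪ C i) = mrank M (T ∪ C i) := by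
        intro i
        rw [Set.insert_union]
        exact mrank_insert_of_mem_closure (hSCE T i (hTI.trans diff_subset)) (hcon i)
      have h1 := hcond (insert e T) (insert_subset he (hTI.trans diff_subset))
      rw [Set.ncard_insert_of_notMem heT hTfin] at h1
      have h2 : ∑ i, mrank M ((insert e T) ∪ C i) = ∑ i, mrank M (T ∪ C i) :=
        Finset.sum_congr rfl fun i _ => hstep i
      have h3 := hTmem.2
      simp only [htight_def] at h3
      omega
    obtain ⟨j, hj⟩ := hej
    have heE : e ∈ M.E := hIE he
    have heCj : e ∉ C j := Set.disjoint_left.mp (hdisj j) he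
    have hinsCj : M.Indep (insert e (C j)) := by
      rw [(hC j).insert_indep_iff_of_notMem heCj]
      exact ⟨heE, fun h => hj (M.closure_subset_closure subset_union_right h)⟩
    set C' : Fin k → Set α := Function.update C j (insert e (C j)) with hC'_def
    have hC'j : C' j = insert e (C j) := Function.update_self _ _ _
    have hC'ne : ∀ i, i ≠ j → C' i = C i := fun i hij => Function.update_of_ne hij _ _
    have hsplit : ∀ (g : Fin k → ℕ), ∑ i, g i = g j + ∑ i ∈ Finset.univ.erase j, g i :=
      fun g => (Finset.add_sum_erase _ g (Finset.mem_univ j)).symm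
    have herase : ∀ (g g' : Fin k → ℕ), (∀ i, i ≠ j → g i = g' i) →
        ∑ i ∈ Finset.univ.erase j, g i = ∑ i ∈ Finset.univ.erase j, g' i :=
      fun g g' h => Finset.sum_congr rfl fun i hi => h i (Finset.ne_of_mem_erase hi)
    -- apply the induction hypothesis
    obtain ⟨F', hF'sub, hF'ind, hF'un⟩ := ih (I \ {e}) C'
      (by have := Set.ncard_diff_singleton_lt_of_mem he hIfin; omega)
      (diff_subset.trans hIE)
      (by
        intro i
        by_cases hij : i = j
        · rw [hij, hC'j]; exact hinsCj
        · rw [hC'ne i hij]; exact hC i)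
      (by
        intro i
        by_cases hij : i = j
        · rw [hij, hC'j, Set.insert_eq, Set.disjoint_union_right]
          exact ⟨Set.disjoint_singleton_right.mpr (fun h => h.2 rfl),
            Disjoint.mono_left diff_subset (hdisj j)⟩
        · rw [hC'ne i hij]; exact Disjoint.mono_left diff_subset (hdisj i))
      (by
        intro S hS
        have hSI : S ⊆ I := hS.trans diff_subset
        have hSfin : S.Finite := hIfin.subset hSI
        have hCjfin : (C j).Finite := indep_finite (hC j)
        have hcnd := hcond S hSI
        rw [hsplit (fun i => (C i).ncard), hsplit (fun i => mrank M (S ∪ C i))] at hcnd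
        rw [hsplit (fun i => (C' i).ncard), hsplit (fun i => mrank M (S ∪ C' i))]
        rw [herase (fun i => (C' i).ncard) (fun i => (C i).ncard)
            (fun i hij => by show (C' i).ncard = (C i).ncard; rw [hC'ne i hij]),
          herase (fun i => mrank M (S ∪ C' i)) (fun i => mrank M (S ∪ C i))
            (fun i hij => by show mrank M (S ∪ C' i) = mrank M (S ∪ C i); rw [hC'ne i hij])]
        simp only [hC'j]
        rw [Set.ncard_insert_of_notMem heCj hCjfin]
        rw [Set.union_insert]
        by_cases hecl : e ∈ M.closure (S ∪ C j)
        · -- S is not tight, so we have a strict inequality to spare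
          have hnt : ¬ tight S := by
            intro ht
            exact hj (M.closure_subset_closure
              (union_subset_union_left _ (hTall S hS ht)) hecl)
          have hne : S.ncard + ∑ i, (C i).ncard ≠ ∑ i, mrank M (S ∪ C i) := hnt
          rw [hsplit (fun i => (C i).ncard), hsplit (fun i => mrank M (S ∪ C i))] at hne
          have hmono : mrank M (S ∪ C j) ≤ mrank M (insert e (S ∪ C j)) :=
            mrank_mono (subset_insert _ _)
          omega
        · rw [mrank_insert_of_not_mem_closure (hSCE S j hSI) heE hecl]
          omega)
    -- assemble the decomposition
    set F : Fin k → Set α := Function.update F' j (insert e (F' j)) with hF_def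
    have hFj : F j = insert e (F' j) := Function.update_self _ _ _
    have hFne : ∀ i, i ≠ j → F i = F' i := fun i hij => Function.update_of_ne hij _ _
    refine ⟨F, ?_, ?_, ?_⟩
    · intro i
      by_cases hij : i = j
      · rw [hij, hFj]
        exact insert_subset he ((hF'sub j).trans diff_subset)
      · rw [hFne i hij]
        exact (hF'sub i).trans diff_subset
    · intro i
      by_cases hij : i = j
      · have h1 := hF'ind j
        rw [hC'j, Set.union_insert, ← Set.insert_union] at h1
        rw [hij, hFj]
        exact h1
      · have h1 := hF'ind i
        rw [hC'ne i hij] at h1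
        rw [hFne i hij]
        exact h1
    · have hU : ⋃ i, F i = insert e (⋃ i, F' i) := by
        apply subset_antisymm
        · refine iUnion_subset fun i => ?_
          by_cases hij : i = j
          · rw [hij, hFj]
            exact insert_subset_insert (subset_iUnion F' j)
          · rw [hFne i hij]
            exact (subset_iUnion F' i).trans (subset_insert _ _)
        · refine insert_subset ?_ ?_
          · exact mem_iUnion.mpr ⟨j, hFj ▸ mem_insert _ _⟩
          · refine iUnion_mono fun i => ?_
            by_cases hij : i = j
            · rw [hij, hFj]; exact subset_insert _ _
            · rw [hFne i hij]
      rw [hU, ← hF'un, Set.insert_diff_singleton, insert_eq_of_mem he]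

end Aux

/-- Rank formula for the union of `k` copies of a matroid `M`. -/
theorem matroid_k_union_rank {α : Type*} (k : ℕ) (M U : Matroid α) [M.Finite]
    (hUE : U.E = M.E)
    (hUI : ∀ I, U.Indep I ↔ ∃ F : Fin k → Set α, (∀ i, M.Indep (F i)) ∧ I = ⋃ i, F i)
    (X : Set α) (hX : X ⊆ M.E) :
    mrank U X = sInf {n | ∃ T ⊆ X, n = (X \ T).ncard + k * mrank M T} := by
  haveI hUfin : U.Finite := ⟨hUE ▸ M.ground_finite⟩
  obtain ⟨B, hB⟩ := U.exists_isBasis' X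
  have hBX : B ⊆ X := hB.subset
  have hXfin : X.Finite := M.set_finite X hX
  have hBfin : B.Finite := hXfin.subset hBX
  have hrU : mrank U X = B.ncard := mrank_eq_of_basis' hB
  obtain ⟨F, hF, hFB⟩ := (hUI B).mp hB.indep
  -- counting bound from the decomposition
  have hkey1 : ∀ T : Set α, (B ∩ T).ncard ≤ k * mrank M T := by
    intro T
    have h1 : B ∩ T = ⋃ i, (F i ∩ T) := by rw [hFB, Set.iUnion_inter]
    rw [h1]
    refine le_trans (ncard_iUnion_le _ (fun i => (indep_finite (hF i)).inter_of_left T)) ?_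
    calc ∑ i : Fin k, (F i ∩ T).ncard
        ≤ ∑ _i : Fin k, mrank M T := Finset.sum_le_sum fun i _ =>
          indep_ncard_le_mrank ((hF i).subset inter_subset_left) inter_subset_right
      _ = k * mrank M T := by
          simp [Finset.sum_const, Finset.card_univ, mul_comm]
  have heasyS : ∀ S, S ⊆ B → S.ncard ≤ k * mrank M S := by
    intro S hSB
    have h1 : B ∩ S = S := inter_eq_self_of_subset_right hSB
    have := hkey1 S
    rwa [h1] at this
  -- easy direction
  have hle : ∀ m ∈ {n | ∃ T ⊆ X, n = (X \ T).ncard + k * mrank M T}, mrank U X ≤ m := by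
    rintro m ⟨T, hT, rfl⟩
    rw [hrU]
    have hd : B \ (B ∩ T) = B \ T := by ext y; simp
    have h2 := Set.ncard_diff_add_ncard_of_subset (inter_subset_left : B ∩ T ⊆ B) hBfin
    rw [hd] at h2
    have h3 : (B \ T).ncard ≤ (X \ T).ncard :=
      Set.ncard_le_ncard (diff_subset_diff_left hBX) (hXfin.diff)
    have h4 := hkey1 T
    omega
  -- violating sets for elements outside B
  have hviol : ∀ x ∈ X \ B, ∃ S, S ⊆ X ∧ (S ∩ B).ncard = k * mrank M S ∧ x ∈ S := by
    intro x hx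
    have hxB : x ∉ B := hx.2
    have hdep : ¬ U.Indep (insert x B) := by
      intro hind
      have := hB.2 ⟨hind, insert_subset hx.1 hBX⟩ (subset_insert x B)
      exact hxB (this (mem_insert x B))
    have hcon : ¬ (∀ S, S ⊆ insert x B →
        S.ncard + ∑ _i : Fin k, (∅ : Set α).ncard ≤ ∑ _i : Fin k, mrank M (S ∪ ∅)) := by
      intro hcond
      obtain ⟨G, hGsub, hGind, hGun⟩ := key_partition M k (insert x B).ncard (insert x B)
        (fun _ => ∅) le_rfl (insert_subset (hX hx.1) (hBX.trans hX))
        (fun _ => M.empty_indep) (fun _ => disjoint_empty _) hcond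
      exact hdep ((hUI _).mpr ⟨G, fun i => by simpa using hGind i, hGun⟩)
    push_neg at hcon
    obtain ⟨S, hSsub, hSgt⟩ := hcon
    simp only [Set.ncard_empty, Finset.sum_const, Finset.card_univ, Fintype.card_fin,
      smul_eq_mul, mul_zero, add_zero, union_empty, not_le] at hSgt
    -- hSgt : k * mrank M S < S.ncard
    have hSfin : S.Finite := hXfin.subset (hSsub.trans (insert_subset hx.1 hBX))
    have hxS : x ∈ S := by
      by_contra hxS
      have hSB : S ⊆ B := fun y hy => by
        rcases hSsub hy with h | h
        · exact absurd (h ▸ hy) hxS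
        · exact h
      exact absurd (heasyS S hSB) (by omega)
    have h1 : S \ {x} ⊆ B := by
      rintro y ⟨hy, hyx⟩
      rcases hSsub hy with h | h
      · exact absurd h hyx
      · exact h
    have h2 : S ∩ B = S \ {x} := by
      ext y
      constructor
      · rintro ⟨hy, hyB⟩
        exact ⟨hy, fun h => hxB (h ▸ hyB)⟩
      · rintro ⟨hy, hyx⟩
        exact ⟨hy, h1 ⟨hy, hyx⟩⟩
    have h3 : (S \ {x}).ncard + 1 = S.ncard := Set.ncard_diff_singleton_add_one hxS hSfin
    have h4 := heasyS (S \ {x}) h1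
    have h5 : k * mrank M (S \ {x}) ≤ k * mrank M S :=
      Nat.mul_le_mul_left k (mrank_mono diff_subset)
    refine ⟨S, hSsub.trans (insert_subset hx.1 hBX), ?_, hxS⟩
    rw [h2]
    omega
  -- tight sets are closed under union
  have hQunion : ∀ T T', T ⊆ X → T' ⊆ X → (T ∩ B).ncard = k * mrank M T →
      (T' ∩ B).ncard = k * mrank M T' →
      ((T ∪ T') ∩ B).ncard = k * mrank M (T ∪ T') := by
    intro T T' hT hT' hQT hQT'
    have hsub := mrank_submod (M := M) (X := T) (Y := T') (hT.trans hX) (hT'.trans hX)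
    have hsubk : k * mrank M (T ∪ T') + k * mrank M (T ∩ T') ≤
        k * mrank M T + k * mrank M T' := by
      rw [← Nat.mul_add, ← Nat.mul_add]
      exact Nat.mul_le_mul_left k hsub
    have hcard : ((T ∪ T') ∩ B).ncard + ((T ∩ T') ∩ B).ncard =
        (T ∩ B).ncard + (T' ∩ B).ncard := by
      have h1 : (T ∩ B) ∪ (T' ∩ B) = (T ∪ T') ∩ B := by ext y; simp; tauto
      have h2 : (T ∩ B) ∩ (T' ∩ B) = (T ∩ T') ∩ B := by ext y; simp; tauto
      have h3 := Set.ncard_union_add_ncard_inter (T ∩ B) (T' ∩ B)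
        (hBfin.subset inter_subset_right) (hBfin.subset inter_subset_right)
      rw [h1, h2] at h3
      omega
    have hb1 : ((T ∪ T') ∩ B).ncard ≤ k * mrank M (T ∪ T') :=
      le_trans (heasyS _ inter_subset_right)
        (Nat.mul_le_mul_left k (mrank_mono inter_subset_left))
    have hb2 : ((T ∩ T') ∩ B).ncard ≤ k * mrank M (T ∩ T') :=
      le_trans (heasyS _ inter_subset_right)
        (Nat.mul_le_mul_left k (mrank_mono inter_subset_left))
    omega
  -- build a tight set containing X \ B
  have hmain : ∀ D : Set α, D.Finite → D ⊆ X \ B →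
      ∃ T, T ⊆ X ∧ (T ∩ B).ncard = k * mrank M T ∧ D ⊆ T := by
    intro D hD
    induction D, hD using Set.Finite.induction_on with
    | empty =>
      intro _
      exact ⟨∅, empty_subset X, by simp [mrank_empty], empty_subset _⟩
    | @insert a s has hsfin ih =>
      intro hsub
      obtain ⟨T, hTX, hTQ, hTD⟩ := ih ((subset_insert a s).trans hsub)
      obtain ⟨S, hSX, hSQ, haS⟩ := hviol a (hsub (mem_insert a s))
      refine ⟨T ∪ S, union_subset hTX hSX, hQunion T S hTX hSX hTQ hSQ, ?_⟩
      exact insert_subset (Or.inr haS) (hTD.trans subset_union_left)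
  obtain ⟨T, hTX, hTQ, hTD⟩ := hmain (X \ B) (hXfin.diff) Subset.rfl
  have hXT : X \ T = B \ T := by
    ext y
    constructor
    · rintro ⟨hy, hyT⟩
      by_cases hyB : y ∈ B
      · exact ⟨hyB, hyT⟩
      · exact absurd (hTD ⟨hy, hyB⟩) hyT
    · rintro ⟨hy, hyT⟩
      exact ⟨hBX hy, hyT⟩
  have hval : (X \ T).ncard + k * mrank M T = B.ncard := by
    rw [hXT, ← hTQ, Set.inter_comm]
    have hd : B \ (B ∩ T) = B \ T := by ext y; simp
    have h2 := Set.ncard_diff_add_ncard_of_subset (inter_subset_left : B ∩ T ⊆ B) hBfin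
    rw [hd] at h2
    exact h2
  apply le_antisymm
  · exact le_csInf ⟨_, ⟨T, hTX, rfl⟩⟩ hle
  · rw [hrU]
    exact Nat.sInf_le ⟨T, hTX, hval.symm⟩
end

section
/- Let M and N be matroids on E. The maximum size of a common independent set of M and N equals the minimum over X ⊆ E of r_M(X) + r_N(E \ X). -/
section Aux

open Set Matroid

variable {α : Type*}

lemma mrank_set_nonempty (M : Matroid α) (X : Set α) :
    {n | ∃ I, I ⊆ X ∧ M.Indep I ∧ I.ncard = n}.Nonempty :=
  ⟨0, ∅, empty_subset _, M.empty_indep, Set.ncard_empty _⟩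

lemma mrank_set_bddAbove (M : Matroid α) [M.Finite] (X : Set α) :
    BddAbove {n | ∃ I, I ⊆ X ∧ M.Indep I ∧ I.ncard = n} := by
  refine ⟨M.E.ncard, ?_⟩
  rintro n ⟨I, -, hI, rfl⟩
  exact Set.ncard_le_ncard hI.subset_ground M.ground_finite

lemma Matroid.Indep.finite_of_ground {M : Matroid α} [M.Finite] {I : Set α} (hI : M.Indep I) :
    I.Finite :=
  M.ground_finite.subset hI.subset_ground

lemma le_mrank {M : Matroid α} [M.Finite] {J X : Set α} (hJ : M.Indep J) (hJX : J ⊆ X) :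
    J.ncard ≤ mrank M X :=
  le_csSup (mrank_set_bddAbove M X) ⟨J, hJX, hJ, rfl⟩

lemma indep_ncard_le_of_basis' {M : Matroid α} [M.Finite] {I J X : Set α}
    (hI : M.IsBasis' I X) (hJ : M.Indep J) (hJX : J ⊆ X) : J.ncard ≤ I.ncard := by
  by_contra hlt
  push_neg at hlt
  have hIJ : I.encard < J.encard := by
    rw [← hI.indep.finite_of_ground.cast_ncard_eq, ← hJ.finite_of_ground.cast_ncard_eq]
    exact_mod_cast hlt
  obtain ⟨e, he, hins⟩ := hI.indep.augment hJ hIJ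
  exact hI.insert_not_indep ⟨hJX he.1, he.2⟩ hins

lemma mrank_eq_basis' {M : Matroid α} [M.Finite] {I X : Set α} (hI : M.IsBasis' I X) :
    mrank M X = I.ncard := by
  refine le_antisymm (csSup_le (mrank_set_nonempty M X) ?_)
    (le_csSup (mrank_set_bddAbove M X) ⟨I, hI.subset, hI.indep, rfl⟩)
  rintro n ⟨J, hJX, hJ, rfl⟩
  exact indep_ncard_le_of_basis' hI hJ hJX

lemma mrank_submod_s5 (M : Matroid α) [M.Finite] (A B : Set α) :
    mrank M (A ∪ B) + mrank M (A ∩ B) ≤ mrank M A + mrank M B := by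
  obtain ⟨I, hI⟩ := M.exists_isBasis' (A ∩ B)
  obtain ⟨J, hJ, hIJ⟩ := hI.indep.subset_isBasis'_of_subset
    (hI.subset.trans (inter_subset_left.trans subset_union_left))
  have hJfin : J.Finite := hJ.indep.finite_of_ground
  have h1 : mrank M (A ∪ B) = J.ncard := mrank_eq_basis' hJ
  have h2 : mrank M (A ∩ B) = I.ncard := mrank_eq_basis' hI
  have hIsub : I ⊆ J ∩ (A ∩ B) := subset_inter hIJ hI.subset
  have hcard : I.ncard ≤ (J ∩ (A ∩ B)).ncard :=
    Set.ncard_le_ncard hIsub (hJfin.inter_of_left _)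
  have hA : (J ∩ A).ncard ≤ mrank M A :=
    le_mrank (hJ.indep.subset inter_subset_left) inter_subset_right
  have hB : (J ∩ B).ncard ≤ mrank M B :=
    le_mrank (hJ.indep.subset inter_subset_left) inter_subset_right
  have hsum : (J ∩ A).ncard + (J ∩ B).ncard
      = (J ∩ (A ∪ B)).ncard + (J ∩ (A ∩ B)).ncard := by
    rw [← Set.ncard_union_add_ncard_inter (J ∩ A) (J ∩ B) (hJfin.inter_of_left _)
      (hJfin.inter_of_left _), ← inter_union_distrib_left]
    congr 2
    ext x; simp; tauto
  have hJcap : J ∩ (A ∪ B) = J := inter_eq_self_of_subset_left hJ.subset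
  rw [hJcap] at hsum
  omega

lemma mrank_restrict (M : Matroid α) (R A : Set α) (hAR : A ⊆ R) :
    mrank (M ↾ R) A = mrank M A := by
  unfold mrank
  congr 1
  ext n
  constructor
  · rintro ⟨I, hIA, hI, rfl⟩
    exact ⟨I, hIA, (Matroid.restrict_indep_iff.1 hI).1, rfl⟩
  · rintro ⟨I, hIA, hI, rfl⟩
    exact ⟨I, hIA, Matroid.restrict_indep_iff.2 ⟨hI, hIA.trans hAR⟩, rfl⟩

lemma mrank_insert_of_loop {M : Matroid α} {e : α} (he : ¬ M.Indep {e}) (A : Set α) :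
    mrank M (insert e A) = mrank M A := by
  unfold mrank
  congr 1
  ext n
  constructor
  · rintro ⟨I, hIA, hI, rfl⟩
    refine ⟨I, ?_, hI, rfl⟩
    intro x hx
    rcases hIA hx with h | h
    · exact absurd (hI.subset (by simp [h ▸ hx])) he
    · exact h
  · rintro ⟨I, hIA, hI, rfl⟩
    exact ⟨I, hIA.trans (subset_insert _ _), hI, rfl⟩

/-- Contraction of a finite matroid by a single non-loop element `e`. -/
noncomputable def mcon (M : Matroid α) (hM : M.E.Finite) (e : α) (he : M.Indep {e}) :
    Matroid α :=
  (IndepMatroid.ofFinite (E := M.E \ {e}) hM.diff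
    (Indep := fun I => e ∉ I ∧ M.Indep (insert e I))
    (by simp [he])
    (by
      rintro I J ⟨heJ, hJ⟩ hIJ
      exact ⟨fun h => heJ (hIJ h), hJ.subset (insert_subset_insert hIJ)⟩)
    (by
      rintro I J ⟨heI, hI⟩ ⟨heJ, hJ⟩ hcard
      have hJfin : J.Finite := hM.subset (fun x hx => hJ.subset_ground (by simp [hx]))
      have hIfin' : I.Finite := hM.subset (fun x hx => hI.subset_ground (by simp [hx]))
      have hlt : (insert e I).encard < (insert e J).encard := by
        rw [Set.encard_insert_of_notMem heI, Set.encard_insert_of_notMem heJ,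
          ← hIfin'.cast_ncard_eq, ← hJfin.cast_ncard_eq]
        exact_mod_cast by omega
      obtain ⟨x, hx, hxi⟩ := hI.augment hJ hlt
      have hxe : x ≠ e := fun h => hx.2 (by simp [h])
      have hxJ : x ∈ J := (Set.mem_insert_iff.1 hx.1).resolve_left hxe
      have hxI : x ∉ I := fun h => hx.2 (Set.mem_insert_of_mem _ h)
      refine ⟨x, hxJ, hxI, ?_, ?_⟩
      · simp only [Set.mem_insert_iff]
        rintro (h | h)
        · exact hxe h.symm
        · exact heI h
      · rwa [Set.insert_comm] at hxi)
    (by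
      rintro I ⟨heI, hI⟩
      intro x hx
      exact ⟨hI.subset_ground (Set.mem_insert_of_mem _ hx), fun h => heI (h ▸ hx)⟩)).matroid

lemma mcon_E (M : Matroid α) (hM : M.E.Finite) (e : α) (he : M.Indep {e}) :
    (mcon M hM e he).E = M.E \ {e} := rfl

lemma mcon_indep_iff (M : Matroid α) (hM : M.E.Finite) (e : α) (he : M.Indep {e}) {I : Set α} :
    (mcon M hM e he).Indep I ↔ e ∉ I ∧ M.Indep (insert e I) := by
  simp [mcon]

instance mcon_finite (M : Matroid α) (hM : M.E.Finite) (e : α) (he : M.Indep {e}) :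
    (mcon M hM e he).Finite :=
  ⟨hM.diff⟩

lemma mrank_mcon (M : Matroid α) [M.Finite] (e : α) (he : M.Indep {e})
    (A : Set α) (heA : e ∉ A) :
    mrank (mcon M M.ground_finite e he) A + 1 = mrank M (insert e A) := by
  set Mc := mcon M M.ground_finite e he with hMc
  haveI : Mc.Finite := mcon_finite _ _ _ _
  refine le_antisymm ?_ ?_
  · obtain ⟨I, hI⟩ := Mc.exists_isBasis' A
    rw [mrank_eq_basis' hI]
    obtain ⟨heI, hins⟩ := (mcon_indep_iff M M.ground_finite e he).1 hI.indep
    have hIfin : I.Finite := hins.finite_of_ground.subset (subset_insert _ _)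
    have : (insert e I).ncard = I.ncard + 1 := Set.ncard_insert_of_notMem heI hIfin
    calc I.ncard + 1 = (insert e I).ncard := this.symm
      _ ≤ mrank M (insert e A) := le_mrank hins (insert_subset_insert hI.subset)
  · obtain ⟨J, hJ, heJ⟩ := he.subset_isBasis'_of_subset
      (singleton_subset_iff.2 (mem_insert _ _))
    have heJ' : e ∈ J := heJ rfl
    rw [mrank_eq_basis' hJ]
    have hJfin : J.Finite := hJ.indep.finite_of_ground
    have hcon : Mc.Indep (J \ {e}) := by
      rw [hMc, mcon_indep_iff]
      refine ⟨by simp, ?_⟩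
      rw [Set.insert_diff_singleton, Set.insert_eq_self.2 heJ']
      exact hJ.indep
    have hsub : J \ {e} ⊆ A := by
      intro x hx
      rcases hJ.subset hx.1 with h | h
      · exact absurd h hx.2
      · exact h
    have h1 : (J \ {e}).ncard + 1 = J.ncard := Set.ncard_diff_singleton_add_one heJ' hJfin
    have h2 : (J \ {e}).ncard ≤ mrank Mc A := le_mrank hcon hsub
    omega

lemma cmax_bddAbove (M N : Matroid α) [M.Finite] :
    BddAbove {n | ∃ I, M.Indep I ∧ N.Indep I ∧ I.ncard = n} := by
  refine ⟨M.E.ncard, ?_⟩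
  rintro n ⟨I, hI, -, rfl⟩
  exact Set.ncard_le_ncard hI.subset_ground M.ground_finite

lemma cmax_nonempty (M N : Matroid α) :
    {n | ∃ I, M.Indep I ∧ N.Indep I ∧ I.ncard = n}.Nonempty :=
  ⟨0, ∅, M.empty_indep, N.empty_indep, Set.ncard_empty _⟩

/-- The key existence half of matroid intersection, proved by induction on the ground set. -/
lemma exists_min_le_cmax (k : ℕ) : ∀ (M N : Matroid α), M.Finite → N.E = M.E →
    M.E.ncard ≤ k →
    ∃ X ⊆ M.E, mrank M X + mrank N (M.E \ X)
      ≤ sSup {n | ∃ I, M.Indep I ∧ N.Indep I ∧ I.ncard = n} := by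
  induction k with
  | zero =>
    intro M N hMfin hNE hcard
    haveI := hMfin
    have hE : M.E = ∅ := by
      rw [← Set.ncard_eq_zero M.ground_finite]; omega
    refine ⟨∅, empty_subset _, ?_⟩
    have h1 : mrank M ∅ = 0 := by
      refine Nat.le_antisymm (csSup_le (mrank_set_nonempty M ∅) ?_) (Nat.zero_le _)
      rintro n ⟨I, hIA, -, rfl⟩
      simp [subset_empty_iff.1 hIA]
    have h2 : mrank N (M.E \ ∅) = 0 := by
      refine Nat.le_antisymm (csSup_le (mrank_set_nonempty N _) ?_) (Nat.zero_le _)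
      rintro n ⟨I, hIA, -, rfl⟩
      rw [diff_empty, hE, subset_empty_iff] at hIA
      simp [hIA]
    have h3 : mrank M ∅ + mrank N (M.E \ ∅) = 0 := by rw [h1, h2]
    omega
  | succ k ih =>
    intro M N hMfin hNE hcard
    haveI := hMfin
    set S := {n | ∃ I, M.Indep I ∧ N.Indep I ∧ I.ncard = n} with hS
    set kk := sSup S with hkk
    rcases Set.eq_empty_or_nonempty M.E with hE | ⟨e, heE⟩
    · refine ⟨∅, empty_subset _, ?_⟩
      have h1 : mrank M ∅ = 0 := by
        refine Nat.le_antisymm (csSup_le (mrank_set_nonempty M ∅) ?_) (Nat.zero_le _)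
        rintro n ⟨I, hIA, -, rfl⟩
        simp [subset_empty_iff.1 hIA]
      have h2 : mrank N (M.E \ ∅) = 0 := by
        refine Nat.le_antisymm (csSup_le (mrank_set_nonempty N _) ?_) (Nat.zero_le _)
        rintro n ⟨I, hIA, -, rfl⟩
        rw [diff_empty, hE, subset_empty_iff] at hIA
        simp [hIA]
      have h3 : mrank M ∅ + mrank N (M.E \ ∅) = 0 := by rw [h1, h2]
      omega
    -- the common ground set minus e
    have hEfin : M.E.Finite := M.ground_finite
    set R := M.E \ {e} with hR
    have hRfin : R.Finite := hEfin.diff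
    have hRcard : R.ncard ≤ k := by
      have : R.ncard + 1 = M.E.ncard := Set.ncard_diff_singleton_add_one heE hEfin
      omega
    -- restriction (deletion) matroids
    have hMr : (M ↾ R).Finite := ⟨hRfin⟩
    have hNr : (N ↾ R).E = (M ↾ R).E := rfl
    have hMrE : (M ↾ R).E = R := rfl
    -- deletions have smaller max
    have hdel_le : sSup {n | ∃ I, (M ↾ R).Indep I ∧ (N ↾ R).Indep I ∧ I.ncard = n} ≤ kk := by
      refine csSup_le (cmax_nonempty _ _) ?_
      rintro n ⟨I, hMI, hNI, rfl⟩
      exact le_csSup (cmax_bddAbove M N)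
        ⟨I, (Matroid.restrict_indep_iff.1 hMI).1, (Matroid.restrict_indep_iff.1 hNI).1, rfl⟩
    obtain ⟨X1, hX1R, hX1⟩ := ih (M ↾ R) (N ↾ R) hMr hNr (by rwa [hMrE])
    rw [hMrE] at hX1R hX1
    have heX1 : e ∉ X1 := fun h => (hX1R h).2 rfl
    -- translate the deletion inequality
    have hRX1 : R \ X1 = M.E \ insert e X1 := by
      rw [hR]; ext x; simp; tauto
    rw [mrank_restrict M R X1 hX1R, mrank_restrict N R (R \ X1) diff_subset, hRX1] at hX1
    have h1 : mrank M X1 + mrank N (M.E \ insert e X1) ≤ kk := le_trans hX1 hdel_le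
    by_cases heM : M.Indep {e}
    · by_cases heN : N.Indep {e}
      · -- main case : e is a non-loop in both matroids; use contraction
        have hkk1 : 1 ≤ kk := by
          refine le_csSup (cmax_bddAbove M N) ⟨{e}, heM, heN, ?_⟩
          simp
        set Mc := mcon M M.ground_finite e heM with hMcdef
        have hNfin : N.Finite := ⟨hNE ▸ M.ground_finite⟩
        haveI := hNfin
        set Nc := mcon N N.ground_finite e heN with hNcdef
        have hMcF : Mc.Finite := mcon_finite _ _ _ _
        haveI := hMcF
        haveI : Nc.Finite := mcon_finite _ _ _ _
        have hMcE : Mc.E = R := rfl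
        have hNcE : Nc.E = Mc.E := by
          show N.E \ {e} = M.E \ {e}
          rw [hNE]
        -- contractions have max at most kk - 1
        have hcon_le : sSup {n | ∃ I, Mc.Indep I ∧ Nc.Indep I ∧ I.ncard = n} + 1 ≤ kk := by
          have hok : sSup {n | ∃ I, Mc.Indep I ∧ Nc.Indep I ∧ I.ncard = n} ≤ kk - 1 := by
            refine csSup_le (cmax_nonempty _ _) ?_
            rintro n ⟨I, hMI, hNI, rfl⟩
            obtain ⟨heI, hMI'⟩ := (mcon_indep_iff _ _ _ _).1 hMI
            obtain ⟨-, hNI'⟩ := (mcon_indep_iff _ _ _ _).1 hNI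
            have hIfin : I.Finite := hMI'.finite_of_ground.subset (subset_insert _ _)
            have hle : (insert e I).ncard ≤ kk :=
              le_csSup (cmax_bddAbove M N) ⟨insert e I, hMI', hNI', rfl⟩
            rw [Set.ncard_insert_of_notMem heI hIfin] at hle
            omega
          omega
        obtain ⟨X2, hX2R, hX2⟩ := ih Mc Nc hMcF hNcE (by rw [hMcE]; exact hRcard)
        rw [hMcE] at hX2R hX2
        have heX2 : e ∉ X2 := fun h => (hX2R h).2 rfl
        -- translate the contraction inequality
        have hMside : mrank Mc X2 + 1 = mrank M (insert e X2) :=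
          mrank_mcon M e heM X2 heX2
        have hNcground : Nc.E = R := hNcE ▸ hMcE
        have hRX2 : Mc.E \ X2 = (N.E \ {e}) \ X2 := by rw [hNE]; rfl
        have heRX2 : e ∉ (N.E \ {e}) \ X2 := by simp
        have hNside : mrank Nc (Mc.E \ X2) + 1 = mrank N (insert e ((N.E \ {e}) \ X2)) := by
          rw [hRX2]; exact mrank_mcon N e heN _ heRX2
        have hins_eq : insert e ((N.E \ {e}) \ X2) = M.E \ X2 := by
          rw [hNE]; ext x
          simp only [Set.mem_insert_iff, Set.mem_diff, Set.mem_singleton_iff]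
          constructor
          · rintro (rfl | ⟨⟨h1, h2⟩, h3⟩)
            · exact ⟨heE, heX2⟩
            · exact ⟨h1, h3⟩
          · rintro ⟨h1, h2⟩
            by_cases hx : x = e
            · exact Or.inl hx
            · exact Or.inr ⟨⟨h1, hx⟩, h2⟩
        rw [hins_eq] at hNside
        rw [hMcE] at hNside
        have h2 : mrank M (insert e X2) + mrank N (M.E \ X2) ≤ kk + 1 := by
          have := hX2
          omega
        -- submodularity on both sides
        have hsubM : mrank M (X1 ∪ insert e X2) + mrank M (X1 ∩ insert e X2)
            ≤ mrank M X1 + mrank M (insert e X2) := mrank_submod_s5 M X1 (insert e X2)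
        have hsubN : mrank N ((M.E \ insert e X1) ∪ (M.E \ X2))
              + mrank N ((M.E \ insert e X1) ∩ (M.E \ X2))
            ≤ mrank N (M.E \ insert e X1) + mrank N (M.E \ X2) :=
          mrank_submod_s5 N _ _
        -- set identities
        have id1 : X1 ∪ insert e X2 = insert e (X1 ∪ X2) := Set.union_insert
        have id2 : X1 ∩ insert e X2 = X1 ∩ X2 := by
          ext x
          simp only [Set.mem_inter_iff, Set.mem_insert_iff]
          constructor
          · rintro ⟨ha, rfl | hb⟩
            · exact absurd ha heX1
            · exact ⟨ha, hb⟩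
          · rintro ⟨ha, hb⟩; exact ⟨ha, Or.inr hb⟩
        have id3 : (M.E \ insert e X1) ∪ (M.E \ X2) = M.E \ (X1 ∩ X2) := by
          ext x
          simp only [Set.mem_union, Set.mem_diff, Set.mem_insert_iff, Set.mem_inter_iff]
          constructor
          · rintro (⟨h1, h2⟩ | ⟨h1, h2⟩)
            · exact ⟨h1, fun h => h2 (Or.inr h.1)⟩
            · exact ⟨h1, fun h => h2 h.2⟩
          · rintro ⟨h1, h2⟩
            by_cases hx : x ∈ X2
            · exact Or.inl ⟨h1, fun h => by
                rcases h with rfl | h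
                · exact heX2 hx
                · exact h2 ⟨h, hx⟩⟩
            · exact Or.inr ⟨h1, hx⟩
        have id4 : (M.E \ insert e X1) ∩ (M.E \ X2) = M.E \ insert e (X1 ∪ X2) := by
          ext x
          simp only [Set.mem_inter_iff, Set.mem_diff, Set.mem_insert_iff, Set.mem_union]
          tauto
        rw [id1, id2] at hsubM
        rw [id3, id4] at hsubN
        -- combine everything
        by_cases hfin : mrank M (insert e (X1 ∪ X2)) + mrank N (M.E \ insert e (X1 ∪ X2)) ≤ kk
        · exact ⟨insert e (X1 ∪ X2), insert_subset heE
            (union_subset (hX1R.trans diff_subset) (hX2R.trans diff_subset)), hfin⟩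
        · refine ⟨X1 ∩ X2, (inter_subset_left.trans (hX1R.trans diff_subset)), ?_⟩
          omega
      · -- e is a loop of N : use X1 itself
        refine ⟨X1, hX1R.trans diff_subset, ?_⟩
        have : mrank N (M.E \ X1) = mrank N (M.E \ insert e X1) := by
          have hEq : M.E \ X1 = insert e (M.E \ insert e X1) := by
            ext x
            simp only [Set.mem_diff, Set.mem_insert_iff]
            constructor
            · rintro ⟨h1, h2⟩
              by_cases hx : x = e
              · exact Or.inl hx
              · exact Or.inr ⟨h1, by simp [hx, h2]⟩
            · rintro (rfl | ⟨h1, h2⟩)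
              · exact ⟨heE, heX1⟩
              · exact ⟨h1, fun h => h2 (Or.inr h)⟩
          rw [hEq, mrank_insert_of_loop heN]
        omega
    · -- e is a loop of M : use insert e X1
      refine ⟨insert e X1, insert_subset heE (hX1R.trans diff_subset), ?_⟩
      rw [mrank_insert_of_loop heM]
      omega

end Aux

/-- Edmonds' matroid intersection theorem. -/
theorem matroid_intersection {α : Type*} (M N : Matroid α) [M.Finite] (hNE : N.E = M.E) :
    sSup {n | ∃ I, M.Indep I ∧ N.Indep I ∧ I.ncard = n}
      = sInf {n | ∃ X ⊆ M.E, n = mrank M X + mrank N (M.E \ X)} := by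
  refine le_antisymm ?_ ?_
  · -- weak duality
    refine le_csInf ⟨mrank M ∅ + mrank N (M.E \ ∅), ∅, Set.empty_subset _, rfl⟩ ?_
    rintro b ⟨X, hX, rfl⟩
    refine csSup_le (cmax_nonempty M N) ?_
    rintro n ⟨I, hMI, hNI, rfl⟩
    have hIfin : I.Finite := hMI.finite_of_ground
    have hsplit : (I ∩ X).ncard + (I \ X).ncard = I.ncard :=
      Set.ncard_inter_add_ncard_diff_eq_ncard I X hIfin
    have h1 : (I ∩ X).ncard ≤ mrank M X :=
      le_mrank (hMI.subset Set.inter_subset_left) Set.inter_subset_right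
    haveI : N.Finite := ⟨hNE ▸ M.ground_finite⟩
    have h2 : (I \ X).ncard ≤ mrank N (M.E \ X) := by
      refine le_mrank (hNI.subset Set.diff_subset) ?_
      intro x hx
      exact ⟨hMI.subset_ground hx.1, hx.2⟩
    omega
  · obtain ⟨X, hX, hle⟩ := exists_min_le_cmax M.E.ncard M N ‹M.Finite› hNE le_rfl
    exact le_trans (Nat.sInf_le ⟨X, hX, rfl⟩) hle
end

section
/- Let G be a graph, M its cycle matroid, and N = (∨^k M)* the dual of the k-fold union of M. If X ⊆ E(G) is a flat of N, then every vertex of the subgraph of G induced by the edge set E(G) \ X has degree at least k+1 in that subgraph. -/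
open Set

/-- Acyclicity of `fromEdgeSet` is antitone. -/
lemma fromEdgeSet_acyclic_anti {V : Type*} {s t : Set (Sym2 V)} (h : s ⊆ t)
    (ht : (SimpleGraph.fromEdgeSet t).IsAcyclic) : (SimpleGraph.fromEdgeSet s).IsAcyclic :=
  fun _ c hc => ht (c.mapLe (SimpleGraph.fromEdgeSet_mono h))
    (hc.mapLe (SimpleGraph.fromEdgeSet_mono h))

/-- Adding a pendant edge at a vertex `v` not touched by `S` preserves acyclicity. -/
lemma pendant_acyclic {V : Type*} {S : Set (Sym2 V)} {v w : V}
    (hS : (SimpleGraph.fromEdgeSet S).IsAcyclic) (hv : ∀ e ∈ S, v ∉ e) :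
    (SimpleGraph.fromEdgeSet (insert s(v, w) S)).IsAcyclic := by
  classical
  intro u c hc
  have hadj : ∀ x, (SimpleGraph.fromEdgeSet (insert s(v, w) S)).Adj v x → x = w := by
    intro x hx
    rw [SimpleGraph.fromEdgeSet_adj] at hx
    rcases Set.mem_insert_iff.mp hx.1 with h | h
    · exact Sym2.congr_right.mp h
    · exact absurd (Sym2.mem_mk_left v x) (hv _ h)
  by_cases hvs : v ∈ c.support
  · have hp : (c.rotate v hvs).IsCycle := hc.rotate hvs
    have hnn : ¬ (c.rotate v hvs).Nil := hp.not_nil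
    obtain ⟨x, h, q, hpeq⟩ := SimpleGraph.Walk.not_nil_iff.mp hnn
    have hxw : x = w := hadj _ h
    subst x
    rw [hpeq, SimpleGraph.Walk.cons_isCycle_iff] at hp
    have hqnn : ¬ q.reverse.Nil := SimpleGraph.Walk.not_nil_of_ne h.ne
    obtain ⟨y, h2, q2, hqeq⟩ := SimpleGraph.Walk.not_nil_iff.mp hqnn
    have hyw : y = w := hadj _ h2
    subst y
    have hmem : s(v, w) ∈ q.reverse.edges := by
      rw [hqeq, SimpleGraph.Walk.edges_cons]
      exact List.mem_cons_self
    rw [SimpleGraph.Walk.edges_reverse, List.mem_reverse] at hmem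
    exact hp.2 hmem
  · have hedges : ∀ e ∈ c.edges, e ∈ (SimpleGraph.fromEdgeSet S).edgeSet := by
      intro e he
      have heG := c.edges_subset_edgeSet he
      rw [SimpleGraph.edgeSet_fromEdgeSet] at heG ⊢
      refine ⟨?_, heG.2⟩
      rcases Set.mem_insert_iff.mp heG.1 with rfl | h
      · exact absurd (SimpleGraph.Walk.fst_mem_support_of_mem_edges c he) hvs
      · exact h
    exact hS (c.transfer _ hedges) (hc.transfer _)

/-- If a set `J` is independent in the `k`-fold union of the cycle matroid, `e0` is an edge
containing `v`, and at most `k` edges of `insert e0 J` contain `v`, then `insert e0 J` is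
independent in the union matroid. -/
lemma union_indep_insert {V : Type*} [Fintype V] {G : SimpleGraph V} {k : ℕ}
    {M U : Matroid (Sym2 V)}
    (hMI : ∀ X, M.Indep X ↔ X ⊆ G.edgeSet ∧ (SimpleGraph.fromEdgeSet X).IsAcyclic)
    (hUI : ∀ X, U.Indep X ↔ ∃ F : Fin k → Set (Sym2 V), (∀ i, M.Indep (F i)) ∧ X = ⋃ i, F i)
    {J : Set (Sym2 V)} {e0 : Sym2 V} {v : V}
    (hJ : U.Indep J) (he0 : e0 ∈ G.edgeSet) (hv : v ∈ e0)
    (hcard : {e ∈ insert e0 J | v ∈ e}.ncard ≤ k) :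
    U.Indep (insert e0 J) := by
  classical
  rw [hUI] at hJ
  obtain ⟨F, hF, rfl⟩ := hJ
  have he0A : e0 ∈ {e ∈ insert e0 (⋃ i, F i) | v ∈ e} := ⟨Set.mem_insert _ _, hv⟩
  haveI : Fintype ↥{e ∈ insert e0 (⋃ i, F i) | v ∈ e} :=
    Set.Finite.fintype (Set.toFinite _)
  have hcardk : Fintype.card ↥{e ∈ insert e0 (⋃ i, F i) | v ∈ e} ≤ k := by
    rw [Set.ncard_eq_toFinset_card'] at hcard
    rwa [Set.toFinset_card] at hcard
  obtain ⟨f⟩ : Nonempty (↥{e ∈ insert e0 (⋃ i, F i) | v ∈ e} ↪ Fin k) :=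
    Function.Embedding.nonempty_of_card_le (by simpa using hcardk)
  set g : Sym2 V → Fin k := fun e =>
    if h : e ∈ {e ∈ insert e0 (⋃ i, F i) | v ∈ e} then f ⟨e, h⟩ else f ⟨e0, he0A⟩ with hg
  have hg1 : ∀ e (h : e ∈ {e ∈ insert e0 (⋃ i, F i) | v ∈ e}), g e = f ⟨e, h⟩ := by
    intro e h
    simp only [hg]
    exact dif_pos h
  rw [hUI]
  refine ⟨fun i => {e ∈ F i | v ∉ e} ∪
      {e ∈ {e ∈ insert e0 (⋃ i, F i) | v ∈ e} | g e = i}, ?_, ?_⟩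
  · intro i
    dsimp only
    rw [hMI]
    constructor
    · rintro e (⟨heF, -⟩ | ⟨heA, -⟩)
      · exact ((hMI _).mp (hF i)).1 heF
      · rcases Set.mem_insert_iff.mp heA.1 with rfl | hmem
        · exact he0
        · obtain ⟨j, hj⟩ := Set.mem_iUnion.mp hmem
          exact ((hMI _).mp (hF j)).1 hj
    · have hbase : (SimpleGraph.fromEdgeSet {e ∈ F i | v ∉ e}).IsAcyclic :=
        fromEdgeSet_acyclic_anti (Set.sep_subset _ _) ((hMI _).mp (hF i)).2
      have hsub : {e ∈ {e ∈ insert e0 (⋃ i, F i) | v ∈ e} | g e = i}.Subsingleton := by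
        rintro a ⟨haA, hai⟩ b ⟨hbA, hbi⟩
        have hfab : f ⟨a, haA⟩ = f ⟨b, hbA⟩ := by
          rw [← hg1 a haA, ← hg1 b hbA, hai, hbi]
        exact congrArg Subtype.val (f.injective hfab)
      rcases hsub.eq_empty_or_singleton with hT | ⟨a, hT⟩
      · rw [hT, Set.union_empty]
        exact hbase
      · rw [hT, Set.union_singleton]
        have haA : a ∈ {e ∈ {e ∈ insert e0 (⋃ i, F i) | v ∈ e} | g e = i} := by
          rw [hT]; exact rfl
        obtain ⟨w0, rfl⟩ := Sym2.mem_iff_exists.mp haA.1.2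
        exact pendant_acyclic hbase (fun e he => he.2)
  · ext e
    constructor
    · intro he
      by_cases hve : v ∈ e
      · have heA : e ∈ {e ∈ insert e0 (⋃ i, F i) | v ∈ e} := ⟨he, hve⟩
        exact Set.mem_iUnion.mpr ⟨g e, Or.inr ⟨heA, rfl⟩⟩
      · have heJ : e ∈ ⋃ i, F i := by
          rcases Set.mem_insert_iff.mp he with rfl | h
          · exact absurd hv hve
          · exact h
        obtain ⟨i, hi⟩ := Set.mem_iUnion.mp heJ
        exact Set.mem_iUnion.mpr ⟨i, Or.inl ⟨hi, hve⟩⟩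
    · intro he
      obtain ⟨i, hi⟩ := Set.mem_iUnion.mp he
      rcases hi with ⟨h1, -⟩ | ⟨h1, -⟩
      · exact Set.mem_insert_of_mem _ (Set.mem_iUnion.mpr ⟨i, h1⟩)
      · exact h1.1

theorem flat_complement_min_degree {V : Type*} [Fintype V] (G : SimpleGraph V) (k : ℕ)
    (M : Matroid (Sym2 V)) (hME : M.E = G.edgeSet)
    (hMI : ∀ X, M.Indep X ↔ X ⊆ G.edgeSet ∧ (SimpleGraph.fromEdgeSet X).IsAcyclic)
    (U : Matroid (Sym2 V)) (hUE : U.E = G.edgeSet)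
    (hUI : ∀ X, U.Indep X ↔ ∃ F : Fin k → Set (Sym2 V), (∀ i, M.Indep (F i)) ∧ X = ⋃ i, F i)
    (X : Set (Sym2 V)) (hX : X ⊆ G.edgeSet) (hflat : U✶.IsFlat X) :
    ∀ v : V, (∃ e ∈ G.edgeSet \ X, v ∈ e) →
      k + 1 ≤ {e ∈ G.edgeSet \ X | v ∈ e}.ncard := by
  rintro v ⟨e0, he0, hve0⟩
  by_contra hlt
  push_neg at hlt
  have hcard : {e ∈ G.edgeSet \ X | v ∈ e}.ncard ≤ k := Nat.lt_succ_iff.mp hlt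
  have hXE : X ⊆ U✶.E := by rw [Matroid.dual_ground, hUE]; exact hX
  obtain ⟨I, hI⟩ := U✶.exists_isBasis X hXE
  have hIE : I ⊆ U.E := hI.indep.subset_ground
  have he0X : e0 ∉ X := he0.2
  have he0E : e0 ∈ G.edgeSet := he0.1
  apply he0X
  rw [← hflat.closure, ← hI.closure_eq_closure, hI.indep.mem_closure_iff]
  left
  rw [Matroid.dep_iff]
  constructor
  · intro hind
    obtain ⟨B, hB, hdisj⟩ := (Matroid.dual_indep_iff_exists'.mp hind).2
    have hIdisj : Disjoint I B := hdisj.mono_left (Set.subset_insert _ _)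
    have he0B : e0 ∉ B := Set.disjoint_left.mp hdisj (Set.mem_insert _ _)
    have key1 : ∀ B₀, U.IsBase B₀ → Disjoint I B₀ → X \ I ⊆ B₀ := by
      intro B₀ hB₀ hd x hx
      by_contra hxB
      apply hx.2
      apply hI.mem_of_insert_indep hx.1
      rw [Matroid.dual_indep_iff_exists']
      refine ⟨Set.insert_subset (by rw [hUE]; exact hX hx.1) hIE,
        ⟨B₀, hB₀, Set.disjoint_left.mpr ?_⟩⟩
      rintro a (rfl | haI)
      · exact hxB
      · exact fun hb => Set.disjoint_left.mp hd haI hb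
    have hJ : U.Indep (B \ X) := hB.indep.subset Set.diff_subset
    have hBsub : B \ X ⊆ G.edgeSet \ X := by
      intro x hx
      exact ⟨by rw [← hUE]; exact hB.subset_ground hx.1, hx.2⟩
    have hins : insert e0 (B \ X) ⊆ G.edgeSet \ X := Set.insert_subset he0 hBsub
    have hsubD : {e ∈ insert e0 (B \ X) | v ∈ e} ⊆ {e ∈ G.edgeSet \ X | v ∈ e} :=
      fun e he => ⟨hins he.1, he.2⟩
    have hcardA : {e ∈ insert e0 (B \ X) | v ∈ e}.ncard ≤ k :=
      le_trans (Set.ncard_le_ncard hsubD (Set.toFinite _)) hcard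
    have hkey2 : U.Indep (insert e0 (B \ X)) :=
      union_indep_insert hMI hUI hJ he0E hve0 hcardA
    obtain ⟨B', hB', hsubB', hB'sub⟩ := hkey2.exists_isBase_subset_union_isBase hB
    have hB'insert : B' ⊆ insert e0 B :=
      hB'sub.trans (Set.union_subset (Set.insert_subset_insert Set.diff_subset)
        (Set.subset_insert _ _))
    have hdisjI' : Disjoint I B' := Set.disjoint_left.mpr (by
      intro a haI haB'
      rcases Set.mem_insert_iff.mp (hB'insert haB') with rfl | haB
      · exact he0X (hI.subset haI)
      · exact Set.disjoint_left.mp hIdisj haI haB)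
    have hXI' : X \ I ⊆ B' := key1 B' hB' hdisjI'
    have hBB' : B ⊆ B' := by
      intro x hxB
      by_cases hxX : x ∈ X
      · exact hXI' ⟨hxX, fun hxI => Set.disjoint_left.mp hIdisj hxI hxB⟩
      · exact hsubB' (Set.mem_insert_of_mem _ ⟨hxB, hxX⟩)
    have hBeq : B = B' := hB.eq_of_subset_isBase hB' hBB'
    exact he0B (hBeq ▸ hsubB' (Set.mem_insert _ _))
  · rw [Matroid.dual_ground, hUE]
    refine Set.insert_subset he0E (hI.subset.trans hX)
end

section
/- Let H be a graph with minimum degree δ ≥ 1, and let D be a set of paths of length 2 in H such that every edge of H is incident with (shares a vertex with) some path in D. Let H* be the union of the paths in D, with n* vertices and m* edges, and let H have n vertices and m edges. Then m - m* ≥ δ(n - n*). -/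
theorem dominating_two_paths_bound {V : Type*} [Fintype V] (H : SimpleGraph V) (δ : ℕ)
    (hδ : 1 ≤ δ) (hdeg : ∀ v : V, δ ≤ (H.neighborSet v).ncard)
    (D : Set (V × V × V))
    (hpath : ∀ p ∈ D, H.Adj p.1 p.2.1 ∧ H.Adj p.2.1 p.2.2 ∧ p.1 ≠ p.2.2)
    (hdom : ∀ e ∈ H.edgeSet, ∃ p ∈ D, ∃ v, v ∈ e ∧ (v = p.1 ∨ v = p.2.1 ∨ v = p.2.2)) :
    (H.edgeSet.ncard : ℤ) -
        ({e | ∃ p ∈ D, e = s(p.1, p.2.1) ∨ e = s(p.2.1, p.2.2)} : Set (Sym2 V)).ncard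
      ≥ δ * ((Fintype.card V : ℤ) -
        ({v | ∃ p ∈ D, v = p.1 ∨ v = p.2.1 ∨ v = p.2.2} : Set V).ncard) := by
  classical
  set S : Set V := {v | ∃ p ∈ D, v = p.1 ∨ v = p.2.1 ∨ v = p.2.2} with hS
  set Es : Set (Sym2 V) := {e | ∃ p ∈ D, e = s(p.1, p.2.1) ∨ e = s(p.2.1, p.2.2)} with hEs
  -- Es ⊆ edgeSet
  have hES : Es ⊆ H.edgeSet := by
    rintro e ⟨p, hp, he | he⟩
    · subst he; exact (hpath p hp).1
    · subst he; exact (hpath p hp).2.1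
  -- every edge has a vertex in S
  have hedgeS : ∀ e ∈ H.edgeSet, ∃ v, v ∈ e ∧ v ∈ S := by
    intro e he
    obtain ⟨p, hp, v, hv, hv'⟩ := hdom e he
    exact ⟨v, hv, ⟨p, hp, hv'⟩⟩
  -- vertices of Es edges are in S
  have hEsS : ∀ e ∈ Es, ∀ v ∈ e, v ∈ S := by
    rintro e ⟨p, hp, he | he⟩ v hv <;> subst he <;>
      rcases Sym2.mem_iff.1 hv with h | h <;> subst h
    · exact ⟨p, hp, Or.inl rfl⟩
    · exact ⟨p, hp, Or.inr (Or.inl rfl)⟩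
    · exact ⟨p, hp, Or.inr (Or.inl rfl)⟩
    · exact ⟨p, hp, Or.inr (Or.inr rfl)⟩
  let T : Finset V := Sᶜ.toFinset
  let f : V → Finset (Sym2 V) := fun v => H.incidenceFinset v
  -- incident edges of vertices outside S lie in edgeSet \ Es
  have hsub : ∀ v ∈ T, f v ⊆ (H.edgeSet \ Es).toFinset := by
    intro v hv e he
    rw [Set.mem_toFinset] at hv ⊢
    rw [SimpleGraph.mem_incidenceFinset] at he
    obtain ⟨heE, hve⟩ := he
    refine ⟨heE, fun heEs => hv (hEsS e heEs v hve)⟩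
  -- pairwise disjoint
  have hdisj : (T : Set V).PairwiseDisjoint f := by
    intro v hv w hw hvw
    simp only [Finset.mem_coe, Set.mem_toFinset, T] at hv hw
    refine Finset.disjoint_left.2 fun e hev hew => ?_
    rw [SimpleGraph.mem_incidenceFinset] at hev hew
    obtain ⟨heE, hve⟩ := hev
    obtain ⟨_, hwe⟩ := hew
    obtain ⟨u, hu, huS⟩ := hedgeS e heE
    have he : e = s(v, w) := (Sym2.mem_and_mem_iff hvw).1 ⟨hve, hwe⟩
    subst he
    rcases Sym2.mem_iff.1 hu with h | h
    · exact hv (h ▸ huS)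
    · exact hw (h ▸ huS)
  -- counting
  have hcard : δ * T.card ≤ (H.edgeSet \ Es).toFinset.card := by
    calc δ * T.card = ∑ v ∈ T, δ := by rw [Finset.sum_const, smul_eq_mul, mul_comm]
    _ ≤ ∑ v ∈ T, (f v).card := by
        refine Finset.sum_le_sum fun v _ => ?_
        have := hdeg v
        rw [Set.ncard_eq_toFinset_card', ← SimpleGraph.neighborFinset_def] at this
        show δ ≤ (H.incidenceFinset v).card
        rwa [SimpleGraph.card_incidenceFinset_eq_degree, SimpleGraph.degree]
    _ = (T.biUnion f).card := (Finset.card_biUnion hdisj).symm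
    _ ≤ (H.edgeSet \ Es).toFinset.card := by
        apply Finset.card_le_card
        intro e he
        obtain ⟨v, hv, hev⟩ := Finset.mem_biUnion.1 he
        exact hsub v hv hev
  -- translate to ncard / ℤ
  have hTn : T.card = Sᶜ.ncard := (Set.ncard_eq_toFinset_card' _).symm
  have hEn : (H.edgeSet \ Es).toFinset.card = (H.edgeSet \ Es).ncard :=
    (Set.ncard_eq_toFinset_card' _).symm
  have h1 : (H.edgeSet \ Es).ncard = H.edgeSet.ncard - Es.ncard :=
    Set.ncard_diff hES
  have hle : Es.ncard ≤ H.edgeSet.ncard := Set.ncard_le_ncard hES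
  have h2 : S.ncard + Sᶜ.ncard = Fintype.card V := by
    rw [Set.ncard_add_ncard_compl, Nat.card_eq_fintype_card]
  have hSle : S.ncard ≤ Fintype.card V := by omega
  have hkey : δ * (Fintype.card V - S.ncard) ≤ H.edgeSet.ncard - Es.ncard := by
    rw [← h1, ← hEn]
    have : Fintype.card V - S.ncard = Sᶜ.ncard := by omega
    rw [this, ← hTn]
    exact hcard
  have := (Int.ofNat_le.2 hkey)
  push_cast [Nat.cast_sub hle, Nat.cast_sub hSle] at this
  linarith
end

section
/- Let k ≥ 1 be an integer, ε = 1/(3k+2), and let H be a graph with fractional arboricity at most k + ε and minimum degree at least k+1. Then every set D of 2-paths dominating E(H) satisfies |D| ≥ ε·|V(H)|. -/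
open Finset
open scoped Classical


lemma key_lemma {V : Type*} [Fintype V] (H : SimpleGraph V) (D : Finset (V × V × V))
    (hp : ∀ p ∈ D, H.Adj p.1 p.2.1 ∧ H.Adj p.2.1 p.2.2 ∧ p.1 ≠ p.2.2) :
    (D.biUnion (fun p => {p.1, p.2.1, p.2.2})).card ≤
      (H.edgeFinset.filter
        (fun e => ∀ v ∈ e, v ∈ D.biUnion (fun p => {p.1, p.2.1, p.2.2}))).card + D.card := by
  induction D using Finset.induction_on with
  | empty => simp
  | @insert p D' hpD ih =>
    have hp' : ∀ q ∈ D', H.Adj q.1 q.2.1 ∧ H.Adj q.2.1 q.2.2 ∧ q.1 ≠ q.2.2 :=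
      fun q hq => hp q (mem_insert_of_mem hq)
    have hadj1 : H.Adj p.1 p.2.1 := (hp p (mem_insert_self _ _)).1
    have hadj2 : H.Adj p.2.1 p.2.2 := (hp p (mem_insert_self _ _)).2.1
    have hne13 : p.1 ≠ p.2.2 := (hp p (mem_insert_self _ _)).2.2
    set S : Finset V := D'.biUnion (fun p => {p.1, p.2.1, p.2.2}) with hSdef
    set P : Finset V := ({p.1, p.2.1, p.2.2} : Finset V) with hPdef
    have hbU : (insert p D').biUnion (fun q => ({q.1, q.2.1, q.2.2} : Finset V)) = P ∪ S :=
      Finset.biUnion_insert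
    set T : Finset V := P \ S with hTdef
    set e1 : Sym2 V := s(p.1, p.2.1) with he1def
    set e2 : Sym2 V := s(p.2.1, p.2.2) with he2def
    have he12 : e1 ≠ e2 := by
      intro h
      rcases Sym2.eq_iff.mp h with ⟨h1, -⟩ | ⟨h1, -⟩
      · exact hadj1.ne h1
      · exact hne13 h1
    set NE : Finset (Sym2 V) := ({e1, e2} : Finset (Sym2 V)).filter (fun e => ∃ v ∈ e, v ∈ T)
      with hNEdef
    have hinj : (T.erase p.2.1).card ≤ NE.card := by
      apply Finset.card_le_card_of_injOn (fun v => if v = p.1 then e1 else e2)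
      · intro v hv
        have hvT : v ∈ T := Finset.mem_of_mem_erase hv
        have hvne : v ≠ p.2.1 := Finset.ne_of_mem_erase hv
        have hvP : v ∈ P := (Finset.mem_sdiff.mp hvT).1
        rw [hPdef] at hvP
        simp only [Finset.mem_insert, Finset.mem_singleton] at hvP
        by_cases h1 : v = p.1
        · dsimp only; rw [if_pos h1]
          exact Finset.mem_filter.mpr ⟨by simp, ⟨p.1, Sym2.mem_mk_left _ _, h1 ▸ hvT⟩⟩
        · dsimp only; rw [if_neg h1]
          have hv3 : v = p.2.2 := by tauto
          exact Finset.mem_filter.mpr ⟨by simp, ⟨p.2.2, Sym2.mem_mk_right _ _, hv3 ▸ hvT⟩⟩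
      · intro v hv w hw hvw
        simp only [Finset.coe_erase, Set.mem_diff, Finset.mem_coe, Set.mem_singleton_iff] at hv hw
        have hvP : v ∈ P := (Finset.mem_sdiff.mp hv.1).1
        have hwP : w ∈ P := (Finset.mem_sdiff.mp hw.1).1
        rw [hPdef] at hvP hwP
        simp only [Finset.mem_insert, Finset.mem_singleton] at hvP hwP
        dsimp only at hvw
        split_ifs at hvw with h1 h2 h2
        · rw [h1, h2]
        · exact absurd hvw he12
        · exact absurd hvw.symm he12
        · have hv3 : v = p.2.2 := by tauto
          have hw3 : w = p.2.2 := by tauto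
          rw [hv3, hw3]
    have hTcard : T.card ≤ NE.card + 1 := by
      by_cases hm : p.2.1 ∈ T
      · have := Finset.card_erase_of_mem hm
        omega
      · rw [Finset.erase_eq_of_notMem hm] at hinj
        omega
    have hsub : NE ⊆ H.edgeFinset.filter (fun e => ∀ v ∈ e, v ∈ P ∪ S) := by
      intro e he
      obtain ⟨heMem, -⟩ := Finset.mem_filter.mp he
      simp only [Finset.mem_insert, Finset.mem_singleton] at heMem
      refine Finset.mem_filter.mpr ⟨?_, ?_⟩
      · rcases heMem with rfl | rfl
        · exact SimpleGraph.mem_edgeFinset.mpr hadj1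
        · exact SimpleGraph.mem_edgeFinset.mpr hadj2
      · intro v hv
        apply Finset.mem_union_left
        rcases heMem with rfl | rfl
        · rw [he1def] at hv
          rcases Sym2.mem_iff.mp hv with rfl | rfl <;> simp [hPdef]
        · rw [he2def] at hv
          rcases Sym2.mem_iff.mp hv with rfl | rfl <;> simp [hPdef]
    have hdisj : Disjoint NE (H.edgeFinset.filter (fun e => ∀ v ∈ e, v ∈ S)) := by
      rw [Finset.disjoint_left]
      intro e he he'
      obtain ⟨-, v, hvE, hvT⟩ := Finset.mem_filter.mp he
      obtain ⟨-, hall⟩ := Finset.mem_filter.mp he'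
      exact (Finset.mem_sdiff.mp hvT).2 (hall v hvE)
    have hbig : (H.edgeFinset.filter (fun e => ∀ v ∈ e, v ∈ S)).card + NE.card ≤
        (H.edgeFinset.filter (fun e => ∀ v ∈ e, v ∈ P ∪ S)).card := by
      rw [← Finset.card_union_of_disjoint hdisj.symm]
      apply Finset.card_le_card
      apply Finset.union_subset ?_ hsub
      intro e he
      obtain ⟨heE, hall⟩ := Finset.mem_filter.mp he
      exact Finset.mem_filter.mpr ⟨heE, fun v hv => Finset.mem_union_right _ (hall v hv)⟩
    have hcards : ((insert p D').biUnion (fun q => ({q.1, q.2.1, q.2.2} : Finset V))).card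
        = T.card + S.card := by
      rw [hbU, ← Finset.card_sdiff_add_card]
    have hDcard : (insert p D').card = D'.card + 1 := Finset.card_insert_of_notMem hpD
    rw [hcards, hbU, hDcard]
    have := ih hp'
    omega

/-- The fractional arboricity of a graph `G`: the maximum over all subgraphs `H` with at
least two vertices of `|E(H)| / (|V(H)| - 1)`. -/
noncomputable def fracArboricity {V : Type*} [Fintype V] (G : SimpleGraph V) : ℝ :=
  sSup {r : ℝ | ∃ H : G.Subgraph, 2 ≤ H.verts.ncard ∧
    r = (H.edgeSet.ncard : ℝ) / ((H.verts.ncard : ℝ) - 1)}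

theorem dominating_two_paths_lower_bound {V : Type*} [Fintype V] (H : SimpleGraph V)
    (k : ℕ) (hk : 1 ≤ k) (ε : ℝ) (hε : ε = 1 / (3 * k + 2))
    (hfa : fracArboricity H ≤ k + ε)
    (hdeg : ∀ v : V, k + 1 ≤ (H.neighborSet v).ncard)
    (D : Finset (V × V × V))
    (hpath : ∀ p ∈ D, H.Adj p.1 p.2.1 ∧ H.Adj p.2.1 p.2.2 ∧ p.1 ≠ p.2.2)
    (hdom : ∀ e ∈ H.edgeSet, ∃ p ∈ D, ∃ v, v ∈ e ∧ (v = p.1 ∨ v = p.2.1 ∨ v = p.2.2)) :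
    ε * (Fintype.card V : ℝ) ≤ (D.card : ℝ) := by
  have hεpos : 0 < ε := by
    rw [hε]; positivity
  rcases isEmpty_or_nonempty V with hVe | hVn
  · simp [Fintype.card_eq_zero]
  -- degrees
  have hdeg' : ∀ v : V, k + 1 ≤ H.degree v := by
    intro v
    have := hdeg v
    rwa [Set.ncard_eq_toFinset_card', ← SimpleGraph.neighborFinset_def,
      ← SimpleGraph.degree] at this
  -- card V ≥ 2
  have hn2 : 2 ≤ Fintype.card V := by
    obtain ⟨v⟩ := hVn
    have h1 : 0 < H.degree v := by have := hdeg' v; omega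
    obtain ⟨w, hw⟩ := (H.degree_pos_iff_exists_adj v).mp h1
    exact Fintype.one_lt_card_iff.mpr ⟨v, w, hw.ne⟩
  set n : ℕ := Fintype.card V with hn
  -- edge bound from fractional arboricity
  have hedge : (H.edgeFinset.card : ℝ) ≤ ((k : ℝ) + ε) * ((n : ℝ) - 1) := by
    have hmem : ((H.edgeFinset.card : ℝ) / ((n : ℝ) - 1)) ∈
        {r : ℝ | ∃ K : H.Subgraph, 2 ≤ K.verts.ncard ∧
          r = (K.edgeSet.ncard : ℝ) / ((K.verts.ncard : ℝ) - 1)} := by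
      refine ⟨⊤, ?_, ?_⟩
      · rw [SimpleGraph.Subgraph.verts_top, Set.ncard_univ, Nat.card_eq_fintype_card]; exact hn2
      · rw [SimpleGraph.Subgraph.edgeSet_top, SimpleGraph.Subgraph.verts_top, Set.ncard_univ,
          Nat.card_eq_fintype_card, Set.ncard_eq_toFinset_card']
        congr 2
    have hbdd : BddAbove {r : ℝ | ∃ K : H.Subgraph, 2 ≤ K.verts.ncard ∧
        r = (K.edgeSet.ncard : ℝ) / ((K.verts.ncard : ℝ) - 1)} := by
      refine ⟨((Set.univ : Set (Sym2 V)).ncard : ℝ), ?_⟩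
      rintro r ⟨K, hK2, rfl⟩
      have hden : (1 : ℝ) ≤ (K.verts.ncard : ℝ) - 1 := by
        have : (2 : ℝ) ≤ (K.verts.ncard : ℝ) := by exact_mod_cast hK2
        linarith
      have hnum : (K.edgeSet.ncard : ℝ) ≤ ((Set.univ : Set (Sym2 V)).ncard : ℝ) := by
        exact_mod_cast Set.ncard_le_ncard (Set.subset_univ _) Set.finite_univ
      calc (K.edgeSet.ncard : ℝ) / ((K.verts.ncard : ℝ) - 1)
          ≤ (K.edgeSet.ncard : ℝ) / 1 := by
            apply div_le_div_of_nonneg_left ?_ ?_ hden <;> [positivity; linarith]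
        _ ≤ _ := by rw [div_one]; exact hnum
    have hle := le_csSup hbdd hmem
    have hle2 : (H.edgeFinset.card : ℝ) / ((n : ℝ) - 1) ≤ (k : ℝ) + ε :=
      le_trans hle hfa
    have hden : (0 : ℝ) < (n : ℝ) - 1 := by
      have : (2 : ℝ) ≤ (n : ℝ) := by exact_mod_cast hn2
      linarith
    calc (H.edgeFinset.card : ℝ) = (H.edgeFinset.card : ℝ) / ((n : ℝ) - 1) * ((n : ℝ) - 1) := by
          field_simp
      _ ≤ ((k : ℝ) + ε) * ((n : ℝ) - 1) := by
          apply mul_le_mul_of_nonneg_right hle2 (le_of_lt hden)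
  -- the vertex set of the paths
  set S : Finset V := D.biUnion (fun p => {p.1, p.2.1, p.2.2}) with hSdef
  have hs3 : S.card ≤ 3 * D.card := by
    calc S.card ≤ ∑ p ∈ D, ({p.1, p.2.1, p.2.2} : Finset V).card := Finset.card_biUnion_le
      _ ≤ ∑ _p ∈ D, 3 := by
          apply Finset.sum_le_sum
          intro p _
          apply le_trans (Finset.card_insert_le _ _)
          have := Finset.card_insert_le p.2.1 ({p.2.2} : Finset V)
          simp only [Finset.card_singleton] at this ⊢
          omega
      _ = 3 * D.card := by rw [Finset.sum_const, smul_eq_mul, mul_comm]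
  -- every edge has a vertex in S
  have hSmem : ∀ e ∈ H.edgeFinset, ∃ v ∈ e, v ∈ S := by
    intro e he
    obtain ⟨p, hpD, v, hvE, hvP⟩ := hdom e (SimpleGraph.mem_edgeFinset.mp he)
    refine ⟨v, hvE, Finset.mem_biUnion.mpr ⟨p, hpD, ?_⟩⟩
    simp only [Finset.mem_insert, Finset.mem_singleton]
    exact hvP
  -- the partition of edges
  set B : Finset (Sym2 V) := H.edgeFinset.filter (fun e => ∀ v ∈ e, v ∈ S) with hBdef
  set A : Finset (Sym2 V) := H.edgeFinset.filter (fun e => ¬ ∀ v ∈ e, v ∈ S) with hAdef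
  have hAB : B.card + A.card = H.edgeFinset.card :=
    Finset.card_filter_add_card_filter_not _
  -- lower bound on A
  have hA : (k + 1) * (Finset.univ \ S).card ≤ A.card := by
    have hsub : (Finset.univ \ S).biUnion (fun v => H.incidenceFinset v) ⊆ A := by
      intro e he
      obtain ⟨v, hv, hve⟩ := Finset.mem_biUnion.mp he
      have hvS : v ∉ S := (Finset.mem_sdiff.mp hv).2
      have hve' := (SimpleGraph.mem_incidenceFinset _ _ _).mp hve
      refine Finset.mem_filter.mpr ⟨SimpleGraph.mem_edgeFinset.mpr hve'.1, ?_⟩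
      intro hall
      exact hvS (hall v hve'.2)
    have hdisjp : ∀ x ∈ Finset.univ \ S, ∀ y ∈ Finset.univ \ S, x ≠ y →
        Disjoint (H.incidenceFinset x) (H.incidenceFinset y) := by
      intro x hx y hy hxy
      rw [Finset.disjoint_left]
      intro e hex hey
      have hadj : H.Adj x y := H.adj_of_mem_incidenceSet hxy
        ((SimpleGraph.mem_incidenceFinset _ _ _).mp hex) ((SimpleGraph.mem_incidenceFinset _ _ _).mp hey)
      obtain ⟨v, hvE, hvS⟩ := hSmem s(x, y) (SimpleGraph.mem_edgeFinset.mpr hadj)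
      rcases Sym2.mem_iff.mp hvE with rfl | rfl
      · exact (Finset.mem_sdiff.mp hx).2 hvS
      · exact (Finset.mem_sdiff.mp hy).2 hvS
    calc (k + 1) * (Finset.univ \ S).card = ∑ _v ∈ Finset.univ \ S, (k + 1) := by
          rw [Finset.sum_const, smul_eq_mul, mul_comm]
      _ ≤ ∑ v ∈ Finset.univ \ S, (H.incidenceFinset v).card := by
          apply Finset.sum_le_sum
          intro v _
          rw [SimpleGraph.card_incidenceFinset_eq_degree]
          exact hdeg' v
      _ = ((Finset.univ \ S).biUnion (fun v => H.incidenceFinset v)).card :=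
          (Finset.card_biUnion hdisjp).symm
      _ ≤ A.card := Finset.card_le_card hsub
  -- lower bound on B (key lemma)
  have hB : S.card ≤ B.card + D.card := key_lemma H D hpath
  -- cast everything to ℝ and finish
  have hsn : S.card ≤ n := Finset.card_le_univ S
  have hIc : ((Finset.univ \ S).card : ℝ) = (n : ℝ) - (S.card : ℝ) := by
    rw [Finset.card_sdiff_of_subset (Finset.subset_univ S), Finset.card_univ]
    rw [← hn]
    push_cast [Nat.cast_sub hsn]
    ring
  have c1 : ((k : ℝ) + 1) * ((n : ℝ) - (S.card : ℝ)) ≤ (A.card : ℝ) := by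
    rw [← hIc]
    exact_mod_cast hA
  have c2 : (S.card : ℝ) ≤ (B.card : ℝ) + (D.card : ℝ) := by exact_mod_cast hB
  have c3 : (A.card : ℝ) + (B.card : ℝ) ≤ ((k : ℝ) + ε) * ((n : ℝ) - 1) := by
    have : (B.card : ℝ) + (A.card : ℝ) = (H.edgeFinset.card : ℝ) := by exact_mod_cast hAB
    linarith
  have c5 : (S.card : ℝ) ≤ 3 * (D.card : ℝ) := by exact_mod_cast hs3
  have hkR : (1 : ℝ) ≤ (k : ℝ) := by exact_mod_cast hk
  have t1 : ((k : ℝ) + 1) * ((n : ℝ) - (S.card : ℝ)) + ((S.card : ℝ) - (D.card : ℝ))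
      ≤ ((k : ℝ) + ε) * ((n : ℝ) - 1) := by linarith
  have t2 : (1 - ε) * (n : ℝ) ≤ (k : ℝ) * (S.card : ℝ) + (D.card : ℝ) := by nlinarith
  have t3 : (k : ℝ) * (S.card : ℝ) ≤ (k : ℝ) * (3 * (D.card : ℝ)) :=
    mul_le_mul_of_nonneg_left c5 (by linarith)
  have t4 : (1 - ε) * (n : ℝ) ≤ (3 * (k : ℝ) + 1) * (D.card : ℝ) := by nlinarith
  have t5 : (1 : ℝ) - ε = ε * (3 * (k : ℝ) + 1) := by
    rw [hε]
    have h32 : (3 * (k : ℝ) + 2) ≠ 0 := by positivity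
    field_simp
    ring
  have t5n : (1 - ε) * (n : ℝ) = ε * (3 * (k : ℝ) + 1) * (n : ℝ) := by rw [t5]
  have h3k : (0 : ℝ) < 3 * (k : ℝ) + 1 := by positivity
  have t6 : (3 * (k : ℝ) + 1) * (ε * (n : ℝ)) ≤ (3 * (k : ℝ) + 1) * (D.card : ℝ) := by
    nlinarith
  exact le_of_mul_le_mul_left t6 h3k
end
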